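/- arXiv:2502.08286 — 6 statements merged into one kernel-verified Lean document; each statement's English description precedes it below -/
import Mathlib

section
/- Assume X and Y are nonempty and bounded, and let h* be the minimum of z over X × Y. If the system {−Aᵀu − C y ≤ g, a·u − e·y < −h*, u ≥ 0} has no solution (u, y) ∈ ℝ^q × ℝ^m, then the system {A x ≤ a, Cᵀx = −e, g·x = h*, x ≥ 0} has a solution, and every solution x* of this system together with an arbitrary y ∈ Y satisfies z(x*, y) = h*, i.e. (x*, y) is an optimal solution of the disjoint bilinear programming problem. -/
open Matrix Finset
open scoped RealInnerProductSpace

set_option linter.unusedSectionVars false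


section Cone
variable {E : Type*} [NormedAddCommGroup E] [NormedSpace ℝ E] [FiniteDimensional ℝ E]
variable {ι : Type*} [Fintype ι] [DecidableEq ι]

lemma cara_aux (v : ι → E) :
    ∀ (N : ℕ) (t : ι → ℝ), (Finset.univ.filter (fun i => t i ≠ 0)).card ≤ N → 0 ≤ t →
    ∃ (T : Finset ι), LinearIndependent ℝ (fun i : T => v i) ∧
      ∃ t' : ι → ℝ, 0 ≤ t' ∧ (∀ i ∉ T, t' i = 0) ∧
        ∑ i, t' i • v i = ∑ i, t i • v i := by
  intro N
  induction N with
  | zero =>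
      intro t hcard ht
      have : ∀ i, t i = 0 := by
        intro i
        by_contra h
        have : i ∈ Finset.univ.filter (fun i => t i ≠ 0) := by simp [h]
        have := Finset.card_pos.mpr ⟨i, this⟩
        omega
      refine ⟨∅, linearIndependent_empty_type, t, ht, fun i _ => this i, rfl⟩
  | succ N ih =>
      intro t hcard ht
      set s : Finset ι := Finset.univ.filter (fun i => t i ≠ 0) with hs
      by_cases hli : LinearIndependent ℝ (fun i : s => v i)
      · exact ⟨s, hli, t, ht, fun i hi => by simpa [hs] using hi, rfl⟩
      · rw [Fintype.not_linearIndependent_iff] at hli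
        obtain ⟨gs, hgs, j₀, hj₀⟩ := hli
        classical
        have key : ∀ c : ι → ℝ, ∑ i, c i • v i = 0 → (∀ i ∉ s, c i = 0) → (∃ i, 0 < c i) →
            ∃ (T : Finset ι), LinearIndependent ℝ (fun i : T => v i) ∧
              ∃ t' : ι → ℝ, 0 ≤ t' ∧ (∀ i ∉ T, t' i = 0) ∧
                ∑ i, t' i • v i = ∑ i, t i • v i := by
          rintro c hcsum hcs ⟨ip, hip⟩
          set P : Finset ι := Finset.univ.filter (fun i => 0 < c i) with hP
          have hPne : P.Nonempty := ⟨ip, by simp [hP, hip]⟩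
          obtain ⟨i₀, hi₀P, hi₀min⟩ := P.exists_min_image (fun i => t i / c i) hPne
          set lam : ℝ := t i₀ / c i₀ with hlam
          have hci₀ : 0 < c i₀ := by simpa [hP] using hi₀P
          have hlam0 : 0 ≤ lam := div_nonneg (ht i₀) hci₀.le
          set t' : ι → ℝ := fun i => t i - lam * c i with ht'
          have ht'0 : 0 ≤ t' := by
            intro i
            have h2 : (0:ℝ) ≤ t i := ht i
            by_cases h : 0 < c i
            · have h1 := hi₀min i (by simp [hP, h])
              have h3 : lam * c i ≤ t i / c i * c i :=
                mul_le_mul_of_nonneg_right h1 h.le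
              rw [div_mul_cancel₀ _ h.ne'] at h3
              show (0:ℝ) ≤ t i - lam * c i
              linarith
            · push_neg at h
              have h1 : lam * c i ≤ 0 := mul_nonpos_of_nonneg_of_nonpos hlam0 h
              show (0:ℝ) ≤ t i - lam * c i
              linarith
          have ht'i₀ : t' i₀ = 0 := by
            simp [ht', hlam, div_mul_cancel₀ _ hci₀.ne']
          have hi₀s : i₀ ∈ s := by
            by_contra h
            exact hci₀.ne' (hcs i₀ h)
          have hsupp : Finset.univ.filter (fun i => t' i ≠ 0) ⊆ s.erase i₀ := by
            intro i hi
            simp only [Finset.mem_filter, Finset.mem_univ, true_and] at hi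
            rw [Finset.mem_erase]
            constructor
            · rintro rfl; exact hi ht'i₀
            · by_contra h
              have h1 : t i = 0 := by
                by_contra h2; exact h (by simp [hs, h2])
              have h2 : c i = 0 := hcs i h
              exact hi (by simp [ht', h1, h2])
          have h4 : ∑ i, (lam * c i) • v i = 0 := by
            have : (fun i => (lam * c i) • v i) = fun i => lam • (c i • v i) :=
              funext fun i => (smul_smul _ _ _).symm
            rw [this, ← Finset.smul_sum, hcsum, smul_zero]
          have hsum : ∑ i, t' i • v i = ∑ i, t i • v i := by
            simp only [ht', sub_smul, Finset.sum_sub_distrib]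
            rw [h4, sub_zero]
          have hcard' : (Finset.univ.filter (fun i => t' i ≠ 0)).card ≤ N := by
            have := Finset.card_le_card hsupp
            rw [Finset.card_erase_of_mem hi₀s] at this
            omega
          obtain ⟨T, hT, t'', h1, h2, h3⟩ := ih t' hcard' ht'0
          exact ⟨T, hT, t'', h1, h2, h3.trans hsum⟩
        set c : ι → ℝ := fun i => if h : i ∈ s then gs ⟨i, h⟩ else 0 with hc
        have hcsum : ∑ i, c i • v i = 0 := by
          have h1 : ∑ i ∈ s, c i • v i = ∑ i, c i • v i :=
            Finset.sum_subset (Finset.subset_univ s)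
              (fun i _ hi => by simp [hc, hi])
          rw [← h1, ← Finset.sum_attach s (fun i => c i • v i), ← hgs,
            ← Finset.univ_eq_attach]
          apply Finset.sum_congr rfl
          intro i _
          simp [hc, i.2]
        have hcs : ∀ i ∉ s, c i = 0 := fun i hi => by simp [hc, hi]
        have hcj₀ : c (j₀ : ι) ≠ 0 := by simpa [hc, j₀.2] using hj₀
        by_cases hpos : ∃ i, 0 < c i
        · exact key c hcsum hcs hpos
        · push_neg at hpos
          apply key (-c)
          · simpa using congrArg Neg.neg hcsum
          · intro i hi; simp [hcs i hi]
          · refine ⟨j₀, ?_⟩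
            have := hpos j₀
            simp only [Pi.neg_apply]
            rcases lt_or_eq_of_le this with h | h
            · linarith
            · exact absurd h hcj₀

lemma isClosed_finite_cone (v : ι → E) :
    IsClosed {x : E | ∃ t : ι → ℝ, 0 ≤ t ∧ ∑ i, t i • v i = x} := by
  classical
  have heq : {x : E | ∃ t : ι → ℝ, 0 ≤ t ∧ ∑ i, t i • v i = x}
      = ⋃ (T : Finset ι) (_ : LinearIndependent ℝ (fun i : T => v i)),
        (fun t : (T → ℝ) => ∑ i : T, t i • v i) '' {t | 0 ≤ t} := by
    ext x
    simp only [Set.mem_setOf_eq, Set.mem_iUnion, Set.mem_image]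
    constructor
    · rintro ⟨t, ht, rfl⟩
      obtain ⟨T, hT, t', h1, h2, h3⟩ :=
        cara_aux v (Finset.univ.filter (fun i => t i ≠ 0)).card t le_rfl ht
      refine ⟨T, hT, fun i => t' i, fun i => h1 i, ?_⟩
      rw [← h3, Finset.univ_eq_attach, Finset.sum_attach T (fun i => t' i • v i)]
      exact Finset.sum_subset (Finset.subset_univ T) (fun i _ hi => by simp [h2 i hi])
    · rintro ⟨T, hT, t, ht, rfl⟩
      refine ⟨fun i => if h : i ∈ T then t ⟨i, h⟩ else 0, ?_, ?_⟩
      · intro i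
        dsimp only
        split
        · exact ht _
        · exact le_rfl
      · rw [show ∑ i, (if h : i ∈ T then t ⟨i, h⟩ else 0) • v i
            = ∑ i ∈ T, (if h : i ∈ T then t ⟨i, h⟩ else 0) • v i from
          (Finset.sum_subset (Finset.subset_univ T)
            (fun i _ hi => by simp [hi])).symm]
        rw [← Finset.sum_attach T
          (fun i => (if h : i ∈ T then t ⟨i, h⟩ else 0) • v i), ← Finset.univ_eq_attach]
        apply Finset.sum_congr rfl
        intro i _
        simp [i.2]
  rw [heq]
  apply isClosed_iUnion_of_finite
  intro T
  apply isClosed_iUnion_of_finite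
  intro hT
  have hcl : IsClosed {t : T → ℝ | 0 ≤ t} := by
    have : {t : T → ℝ | 0 ≤ t} = Set.Ici 0 := by ext; simp
    rw [this]; exact isClosed_Ici
  let L : (T → ℝ) →ₗ[ℝ] E :=
    { toFun := fun t => ∑ i : T, t i • v i
      map_add' := by intro x y; simp [add_smul, Finset.sum_add_distrib]
      map_smul' := by intro r x; simp [smul_smul, Finset.smul_sum]
    }
  have hinj : Function.Injective L := by
    rw [← LinearMap.ker_eq_bot, LinearMap.ker_eq_bot']
    intro g hg
    funext i
    exact Fintype.linearIndependent_iff.mp hT g hg i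
  have := (L.isClosedEmbedding_of_injective (LinearMap.ker_eq_bot.mpr hinj)).isClosedMap
  exact this _ hcl

end Cone


lemma separation_pi {κ : Type*} [Fintype κ] (S : Set (κ → ℝ)) (hne : S.Nonempty)
    (hcl : IsClosed S) (hsmul : ∀ (r : ℝ), 0 < r → ∀ x ∈ S, r • x ∈ S)
    (hadd : ∀ x ∈ S, ∀ y ∈ S, x + y ∈ S)
    {b : κ → ℝ} (hb : b ∉ S) : ∃ y : κ → ℝ, (∀ x ∈ S, 0 ≤ x ⬝ᵥ y) ∧ b ⬝ᵥ y < 0 := by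
  set e := PiLp.continuousLinearEquiv 2 ℝ (fun _ : κ => ℝ) with he
  set K : ConvexCone ℝ (EuclideanSpace ℝ κ) :=
    { carrier := ⇑e ⁻¹' S
      smul_mem' := by
        intro r hr x hx
        simp only [Set.mem_preimage, _root_.map_smul] at hx ⊢
        exact hsmul r hr _ hx
      add_mem' := by
        intro x hx y hy
        simp only [Set.mem_preimage, map_add] at hx hy ⊢
        exact hadd _ hx _ hy } with hK
  have hKcl : IsClosed (K : Set (EuclideanSpace ℝ κ)) := hcl.preimage e.continuous
  have hKne : (K : Set (EuclideanSpace ℝ κ)).Nonempty := by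
    obtain ⟨x, hx⟩ := hne
    exact ⟨e.symm x, by simp [hK, Set.mem_preimage, hx]⟩
  have hbK : e.symm b ∉ K := by
    simp [hK, Set.mem_preimage, hb]
  have h0 : (0 : EuclideanSpace ℝ κ) ∈ (K : Set (EuclideanSpace ℝ κ)) := by
    obtain ⟨x, hx⟩ := hKne
    have ht : Filter.Tendsto (fun r : ℝ => r • x) (nhdsWithin 0 (Set.Ioi 0)) (nhds 0) := by
      have hc : Continuous fun r : ℝ => r • x := by fun_prop
      exact (hc.tendsto' 0 0 (by simp)).mono_left nhdsWithin_le_nhds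
    exact hKcl.mem_of_tendsto ht (eventually_nhdsWithin_of_forall fun r hr => K.smul_mem hr hx)
  let P : ProperCone ℝ (EuclideanSpace ℝ κ) :=
    { carrier := K
      add_mem' := fun hx hy => K.add_mem hx hy
      zero_mem' := h0
      smul_mem' := by
        intro c x hx
        rcases eq_or_lt_of_le c.2 with hc | hc
        · have : c = 0 := NNReal.eq hc.symm
          subst this
          simpa using h0
        · change (c:ℝ) • x ∈ K
          exact K.smul_mem hc hx
      isClosed' := hKcl }
  obtain ⟨y, hy1', hy2'⟩ := ProperCone.hyperplane_separation' P (x₀ := e.symm b) hbK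
  have hy1 : ∀ x ∈ K, 0 ≤ (inner (𝕜 := ℝ) x y : ℝ) := fun x hx => hy1' x hx
  have hy2 : (inner (𝕜 := ℝ) y (e.symm b) : ℝ) < 0 := by rw [real_inner_comm]; exact hy2'
  have hinner : ∀ w : κ → ℝ, (inner (𝕜 := ℝ) (e.symm w) y : ℝ) = w ⬝ᵥ e y := by
    intro w
    rw [PiLp.inner_apply]
    apply Finset.sum_congr rfl
    intro i _
    simp [RCLike.inner_apply, dotProduct, he, mul_comm]
  refine ⟨e y, ?_, ?_⟩
  · intro x hx
    have := hy1 (e.symm x) (by simp [hK, Set.mem_preimage, hx])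
    rwa [hinner] at this
  · have h3 : (inner (𝕜 := ℝ) y (e.symm b) : ℝ) < 0 := hy2
    rwa [real_inner_comm, hinner] at h3

theorem farkas_eq {ι κ : Type*} [Fintype ι] [Fintype κ] [DecidableEq ι]
    (M : Matrix κ ι ℝ) (c : κ → ℝ)
    (h : ¬ ∃ x : ι → ℝ, 0 ≤ x ∧ M.mulVec x = c) :
    ∃ y : κ → ℝ, 0 ≤ Mᵀ.mulVec y ∧ c ⬝ᵥ y < 0 := by
  classical
  set v : ι → (κ → ℝ) := fun i j => M j i with hv
  have hmv : ∀ t : ι → ℝ, M.mulVec t = ∑ i, t i • v i := by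
    intro t; funext j
    rw [Finset.sum_apply]
    simp [Matrix.mulVec, dotProduct, hv, mul_comm]
  set S : Set (κ → ℝ) := {x | ∃ t : ι → ℝ, 0 ≤ t ∧ ∑ i, t i • v i = x} with hS
  have hScl : IsClosed S := isClosed_finite_cone v
  have hSne : S.Nonempty := ⟨0, 0, le_rfl, by simp⟩
  have hsmul : ∀ r : ℝ, 0 < r → ∀ x ∈ S, r • x ∈ S := by
    rintro r hr x ⟨t, ht, rfl⟩
    refine ⟨r • t, fun i => mul_nonneg hr.le (ht i), ?_⟩
    rw [Finset.smul_sum]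
    apply Finset.sum_congr rfl
    intro i _
    simp [smul_smul]
  have hadd : ∀ x ∈ S, ∀ y ∈ S, x + y ∈ S := by
    rintro x ⟨t, ht, rfl⟩ y ⟨u, hu, rfl⟩
    refine ⟨t + u, fun i => add_nonneg (ht i) (hu i), ?_⟩
    rw [← Finset.sum_add_distrib]
    apply Finset.sum_congr rfl
    intro i _
    simp [add_smul]
  have hbS : c ∉ S := fun ⟨t, ht, hsum⟩ => h ⟨t, ht, by rw [hmv]; exact hsum⟩
  obtain ⟨y, hy1, hy2⟩ := separation_pi S hSne hScl hsmul hadd hbS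
  refine ⟨y, ?_, hy2⟩
  intro j
  have hvj : v j ∈ S := by
    refine ⟨Pi.single j 1, ?_, ?_⟩
    · intro i
      by_cases hij : i = j <;> simp [Pi.single_apply, hij]
    · simp [Pi.single_apply, ite_smul]
  have h0 := hy1 (v j) hvj
  show (0:ℝ) ≤ Mᵀ.mulVec y j
  simpa [Matrix.mulVec, dotProduct, Matrix.transpose_apply, hv] using h0

theorem farkas_ineq {ι κ : Type*} [Fintype ι] [Fintype κ] [DecidableEq ι] [DecidableEq κ]
    (M : Matrix κ ι ℝ) (c : κ → ℝ)
    (h : ¬ ∃ x : ι → ℝ, 0 ≤ x ∧ M.mulVec x ≤ c) :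
    ∃ y : κ → ℝ, 0 ≤ y ∧ 0 ≤ Mᵀ.mulVec y ∧ c ⬝ᵥ y < 0 := by
  classical
  set N : Matrix κ (ι ⊕ κ) ℝ := Matrix.fromCols M 1 with hN
  have h' : ¬ ∃ z : ι ⊕ κ → ℝ, 0 ≤ z ∧ N.mulVec z = c := by
    rintro ⟨z, hz, hNz⟩
    apply h
    refine ⟨z ∘ Sum.inl, fun i => hz _, ?_⟩
    rw [← Sum.elim_comp_inl_inr z, hN, Matrix.fromCols_mulVec_sumElim,
      Matrix.one_mulVec] at hNz
    intro j
    have h1 : (0:ℝ) ≤ z (Sum.inr j) := hz _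
    have h2 := congrFun hNz j
    simp only [Pi.add_apply, Function.comp_apply] at h2 ⊢
    linarith
  obtain ⟨y, hy1, hy2⟩ := farkas_eq N c h'
  rw [hN, Matrix.transpose_fromCols, Matrix.fromRows_mulVec, Matrix.transpose_one,
    Matrix.one_mulVec] at hy1
  refine ⟨y, fun k => hy1 (Sum.inr k), fun i => hy1 (Sum.inl i), hy2⟩

/-- Theorem 3, property 1) of the paper. -/
theorem stmt_7
    (n m q l : ℕ) (hn : 0 < n) (hm : 0 < m) (hq : 0 < q) (hl : 0 < l)
    (C : Matrix (Fin n) (Fin m) ℝ) (A : Matrix (Fin q) (Fin n) ℝ)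
    (B : Matrix (Fin l) (Fin m) ℝ)
    (a : Fin q → ℝ) (b : Fin l → ℝ) (g : Fin n → ℝ) (e : Fin m → ℝ)
    (z : (Fin n → ℝ) → (Fin m → ℝ) → ℝ)
    (hz : ∀ x y, z x y = x ⬝ᵥ C.mulVec y + g ⬝ᵥ x + e ⬝ᵥ y)
    (X : Set (Fin n → ℝ)) (Y : Set (Fin m → ℝ))
    (hX : X = {x | A.mulVec x ≤ a ∧ 0 ≤ x})
    (hY : Y = {y | B.mulVec y ≤ b ∧ 0 ≤ y})
    (hXne : X.Nonempty) (hYne : Y.Nonempty)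
    (hXbd : Bornology.IsBounded X) (hYbd : Bornology.IsBounded Y)
    (hstar : ℝ) (hmin : IsLeast (Set.image2 z X Y) hstar)
    (hincons : ¬ ∃ (u : Fin q → ℝ) (y : Fin m → ℝ),
        -(Aᵀ.mulVec u) - C.mulVec y ≤ g ∧ a ⬝ᵥ u - e ⬝ᵥ y < -hstar ∧ 0 ≤ u) :
    (∃ x : Fin n → ℝ,
        A.mulVec x ≤ a ∧ Cᵀ.mulVec x = -e ∧ g ⬝ᵥ x = hstar ∧ 0 ≤ x) ∧
    (∀ x : Fin n → ℝ,
        A.mulVec x ≤ a → Cᵀ.mulVec x = -e → g ⬝ᵥ x = hstar → 0 ≤ x →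
        ∀ y ∈ Y, z x y = hstar) := by
  classical
  -- key computation: if Cᵀ x = -e then z x y = g ⬝ᵥ x for any y
  have hzcomp : ∀ x : Fin n → ℝ, Cᵀ.mulVec x = -e → ∀ y : Fin m → ℝ, z x y = g ⬝ᵥ x := by
    intro x hC y
    have h1 : x ⬝ᵥ C.mulVec y = Cᵀ.mulVec x ⬝ᵥ y := by
      rw [Matrix.dotProduct_mulVec, ← Matrix.mulVec_transpose]
    rw [hz, h1, hC]
    simp [neg_dotProduct, dotProduct_comm e y]
  -- part 2
  have part2 : ∀ x : Fin n → ℝ,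
      A.mulVec x ≤ a → Cᵀ.mulVec x = -e → g ⬝ᵥ x = hstar → 0 ≤ x →
      ∀ y ∈ Y, z x y = hstar := by
    intro x _ hC hg _ y _
    rw [hzcomp x hC y, hg]
  refine ⟨?_, part2⟩
  -- feasibility of the dual-type system
  have hu₀ : ∃ u₀ : Fin q → ℝ, 0 ≤ u₀ ∧ -(Aᵀ.mulVec u₀) ≤ g := by
    by_contra hcon
    have hcon' : ¬ ∃ u : Fin q → ℝ, 0 ≤ u ∧ (-Aᵀ).mulVec u ≤ g := by
      rintro ⟨u, h1, h2⟩
      exact hcon ⟨u, h1, by rwa [Matrix.neg_mulVec] at h2⟩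
    obtain ⟨d, hd0, hdA, hdg⟩ := farkas_ineq (-Aᵀ) g hcon'
    have hAd : A.mulVec d ≤ 0 := by
      intro j
      have h1 := hdA j
      rw [Matrix.transpose_neg, Matrix.transpose_transpose, Matrix.neg_mulVec] at h1
      simpa using h1
    have hdne : d ≠ 0 := by
      rintro rfl
      simp at hdg
    obtain ⟨x₀, hx₀⟩ := hXne
    rw [hX] at hx₀
    obtain ⟨R, hR⟩ := isBounded_iff_forall_norm_le.mp hXbd
    have hdn : 0 < ‖d‖ := norm_pos_iff.mpr hdne
    set t : ℝ := (R + 1 + ‖x₀‖) / ‖d‖ with ht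
    have hR0 : ‖x₀‖ ≤ R := hR x₀ (by rw [hX]; exact hx₀)
    have hno : 0 ≤ ‖x₀‖ := norm_nonneg _
    have ht0 : 0 < t := by
      apply div_pos _ hdn
      linarith
    have hmem : x₀ + t • d ∈ X := by
      rw [hX]
      constructor
      · rw [Matrix.mulVec_add, Matrix.mulVec_smul]
        intro j
        have h1 := hx₀.1 j
        have h2 := hAd j
        have h3 : t * A.mulVec d j ≤ 0 := mul_nonpos_of_nonneg_of_nonpos ht0.le (by simpa using h2)
        simp only [Pi.add_apply, Pi.smul_apply, smul_eq_mul]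
        linarith
      · intro j
        have h1 := hx₀.2 j
        have h2 := hd0 j
        have h3 : (0:ℝ) ≤ t * d j := mul_nonneg ht0.le h2
        simp only [Pi.add_apply, Pi.smul_apply, smul_eq_mul]
        simp only [Pi.zero_apply] at h1 h2 ⊢
        linarith
    have hnorm := hR _ hmem
    have h1 : ‖t • d‖ ≤ ‖x₀ + t • d‖ + ‖x₀‖ := by
      calc ‖t • d‖ = ‖x₀ + t • d - x₀‖ := by rw [add_sub_cancel_left]
      _ ≤ _ := norm_sub_le _ _
    rw [norm_smul, Real.norm_eq_abs, abs_of_pos ht0, ht, div_mul_cancel₀ _ hdn.ne'] at h1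
    linarith
  obtain ⟨u₀, hu₀0, hu₀f⟩ := hu₀
  -- the primal system
  set M₀ : Matrix (Fin q ⊕ (Fin m ⊕ (Fin m ⊕ Unit))) (Fin n) ℝ :=
    Matrix.of (Sum.elim A (Sum.elim Cᵀ (Sum.elim (-Cᵀ) (fun _ : Unit => g)))) with hM₀
  set c₀ : (Fin q ⊕ (Fin m ⊕ (Fin m ⊕ Unit))) → ℝ :=
    Sum.elim a (Sum.elim (-e) (Sum.elim e (fun _ => hstar))) with hc₀
  have hP : ∃ x : Fin n → ℝ, 0 ≤ x ∧ M₀.mulVec x ≤ c₀ := by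
    by_contra hcon
    obtain ⟨w, hw0, hwM, hwc⟩ := farkas_ineq M₀ c₀ hcon
    set u : Fin q → ℝ := fun j => w (Sum.inl j) with hu
    set yp : Fin m → ℝ := fun j => w (Sum.inr (Sum.inl j)) with hyp
    set ym : Fin m → ℝ := fun j => w (Sum.inr (Sum.inr (Sum.inl j))) with hym
    set μ : ℝ := w (Sum.inr (Sum.inr (Sum.inr ()))) with hμ
    set y : Fin m → ℝ := ym - yp with hy
    have hμ0 : 0 ≤ μ := hw0 _
    have key : ∀ i, 0 ≤ Aᵀ.mulVec u i - C.mulVec y i + μ * g i := by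
      intro i
      have hMl : ∀ k i, M₀ (Sum.inl k) i = A k i := fun _ _ => rfl
      have hMr1 : ∀ k i, M₀ (Sum.inr (Sum.inl k)) i = Cᵀ k i := fun _ _ => rfl
      have hMr2 : ∀ k i, M₀ (Sum.inr (Sum.inr (Sum.inl k))) i = -Cᵀ k i := fun _ _ => rfl
      have hMr3 : ∀ i, M₀ (Sum.inr (Sum.inr (Sum.inr ()))) i = g i := fun _ => rfl
      have h1 : (0:ℝ) ≤ ∑ j, M₀ᵀ i j * w j := hwM i
      rw [Fintype.sum_sum_type] at h1
      simp only [Fintype.sum_sum_type, Fintype.sum_unique] at h1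
      have e1 : ∑ j, M₀ᵀ i (Sum.inl j) * w (Sum.inl j) = Aᵀ.mulVec u i := by
        apply Finset.sum_congr rfl
        intro j _
        simp [hMl, hMr1, hMr2, Matrix.transpose_apply, hu, hyp, hym]
      have e2 : ∑ j, M₀ᵀ i (Sum.inr (Sum.inl j)) * w (Sum.inr (Sum.inl j))
          = C.mulVec yp i := by
        apply Finset.sum_congr rfl
        intro j _
        simp [hMl, hMr1, hMr2, Matrix.transpose_apply, hu, hyp, hym]
      have e3 : ∑ j, M₀ᵀ i (Sum.inr (Sum.inr (Sum.inl j))) * w (Sum.inr (Sum.inr (Sum.inl j)))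
          = -(C.mulVec ym i) := by
        show _ = -∑ j, C i j * ym j
        rw [← Finset.sum_neg_distrib]
        apply Finset.sum_congr rfl
        intro j _
        simp [hMl, hMr1, hMr2, Matrix.transpose_apply, hu, hyp, hym]
      have e4 : M₀ᵀ i (Sum.inr (Sum.inr (Sum.inr ()))) * w (Sum.inr (Sum.inr (Sum.inr ())))
          = μ * g i := by
        simp [hMr3, Matrix.transpose_apply, mul_comm, hμ]
      rw [e1, e2, e3, e4] at h1
      have e5 : C.mulVec y i = C.mulVec ym i - C.mulVec yp i := by
        rw [hy, Matrix.mulVec_sub]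
        simp
      rw [e5]
      linarith
    have hobj : a ⬝ᵥ u + e ⬝ᵥ y + μ * hstar < 0 := by
      have h1 : (∑ j, c₀ j * w j : ℝ) < 0 := hwc
      rw [Fintype.sum_sum_type] at h1
      simp only [Fintype.sum_sum_type, Fintype.sum_unique] at h1
      have e1 : ∑ j, c₀ (Sum.inl j) * w (Sum.inl j) = a ⬝ᵥ u := by
        apply Finset.sum_congr rfl; intro j _; simp [hc₀, hu, hyp, hym]
      have e2 : ∑ j, c₀ (Sum.inr (Sum.inl j)) * w (Sum.inr (Sum.inl j)) = -(e ⬝ᵥ yp) := by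
        show _ = -∑ j, e j * yp j
        rw [← Finset.sum_neg_distrib]
        apply Finset.sum_congr rfl; intro j _; simp [hc₀, hu, hyp, hym]
      have e3 : ∑ j, c₀ (Sum.inr (Sum.inr (Sum.inl j))) * w (Sum.inr (Sum.inr (Sum.inl j)))
          = e ⬝ᵥ ym := by
        apply Finset.sum_congr rfl; intro j _; simp [hc₀, hu, hyp, hym]
      have e4 : c₀ (Sum.inr (Sum.inr (Sum.inr ()))) * w (Sum.inr (Sum.inr (Sum.inr ())))
          = μ * hstar := by
        simp [hc₀, mul_comm, hμ]
      rw [e1, e2, e3, e4] at h1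
      have e5 : e ⬝ᵥ y = e ⬝ᵥ ym - e ⬝ᵥ yp := by
        rw [hy, dotProduct_sub]
      rw [e5]
      linarith
    rcases eq_or_lt_of_le hμ0 with hμz | hμpos
    · -- μ = 0 : unbounded direction for the dual system
      apply hincons
      have key' : ∀ i, 0 ≤ Aᵀ.mulVec u i - C.mulVec y i := by
        intro i; have := key i; rw [← hμz] at this; simpa using this
      have hobj' : a ⬝ᵥ u + e ⬝ᵥ y < 0 := by
        have := hobj; rw [← hμz] at this; simpa using this
      set δ : ℝ := a ⬝ᵥ u + e ⬝ᵥ y with hδ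
      set t : ℝ := max 0 ((-hstar - a ⬝ᵥ u₀) / δ + 1) with htdef
      have ht0 : 0 ≤ t := le_max_left _ _
      have htgt : (-hstar - a ⬝ᵥ u₀) / δ < t :=
        lt_of_lt_of_le (lt_add_one _) (le_max_right _ _)
      have htδ : t * δ < -hstar - a ⬝ᵥ u₀ := by
        have := (div_lt_iff_of_neg hobj').mp htgt
        linarith [this]
      refine ⟨u₀ + t • u, (-t) • y, ?_, ?_, ?_⟩
      · intro i
        have h1 := hu₀f i
        have h2 := key' i
        have h3 : 0 ≤ t * (Aᵀ.mulVec u i - C.mulVec y i) := mul_nonneg ht0 h2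
        simp only [Matrix.mulVec_add, Matrix.mulVec_smul, Pi.sub_apply, Pi.add_apply,
          Pi.neg_apply, Pi.smul_apply, smul_eq_mul, neg_mul, Matrix.neg_mulVec] at h1 ⊢
        ring_nf
        ring_nf at h1 h3
        linarith
      · have h1 : a ⬝ᵥ (u₀ + t • u) = a ⬝ᵥ u₀ + t * (a ⬝ᵥ u) := by
          rw [dotProduct_add, dotProduct_smul]
          simp
        have h2 : e ⬝ᵥ ((-t) • y) = -t * (e ⬝ᵥ y) := by
          rw [dotProduct_smul]
          simp
        rw [h1, h2]
        have : t * δ = t * (a ⬝ᵥ u) + t * (e ⬝ᵥ y) := by rw [hδ]; ring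
        linarith
      · intro i
        have h1 := hu₀0 i
        have h2 : 0 ≤ t * u i := mul_nonneg ht0 (hw0 _)
        simp only [Pi.add_apply, Pi.smul_apply, smul_eq_mul, Pi.zero_apply] at h1 h2 ⊢
        linarith
    · -- μ > 0 : scale
      apply hincons
      refine ⟨(1/μ) • u, (-(1/μ)) • y, ?_, ?_, ?_⟩
      · intro i
        have h2 := key i
        have h3 : (1/μ) * (-(Aᵀ.mulVec u i) + C.mulVec y i) ≤ (1/μ) * (μ * g i) :=
          mul_le_mul_of_nonneg_left (by linarith) (by positivity)
        rw [one_div, inv_mul_cancel_left₀ hμpos.ne'] at h3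
        simp only [Matrix.mulVec_smul, Pi.sub_apply, Pi.neg_apply, Pi.smul_apply,
          smul_eq_mul] at h3 ⊢
        ring_nf
        ring_nf at h3
        linarith
      · have h1 : a ⬝ᵥ ((1/μ) • u) = (1/μ) * (a ⬝ᵥ u) := by
          rw [dotProduct_smul]; simp
        have h2 : e ⬝ᵥ ((-(1/μ)) • y) = -(1/μ) * (e ⬝ᵥ y) := by
          rw [dotProduct_smul]; simp
        rw [h1, h2]
        have h3 : (1/μ) * (a ⬝ᵥ u + e ⬝ᵥ y) < (1/μ) * (-(μ * hstar)) :=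
          mul_lt_mul_of_pos_left (by linarith) (by positivity)
        rw [mul_neg, one_div, inv_mul_cancel_left₀ hμpos.ne'] at h3
        rw [one_div]
        ring_nf
        ring_nf at h3
        linarith
      · intro i
        have h2 : 0 ≤ (1/μ) * u i := mul_nonneg (by positivity) (hw0 _)
        simpa using h2
  -- extract and finish
  obtain ⟨x, hx0, hxle⟩ := hP
  have hA : A.mulVec x ≤ a := fun j => hxle (Sum.inl j)
  have hC1 : ∀ j, Cᵀ.mulVec x j ≤ -e j := fun j => hxle (Sum.inr (Sum.inl j))
  have hC2 : ∀ j, -(Cᵀ.mulVec x j) ≤ e j := by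
    intro j
    have h0 := hxle (Sum.inr (Sum.inr (Sum.inl j)))
    have h1 : (M₀.mulVec x) (Sum.inr (Sum.inr (Sum.inl j))) = -(Cᵀ.mulVec x j) := by
      show ∑ i, -(Cᵀ j i) * x i = -(Cᵀ.mulVec x j)
      rw [show (Cᵀ.mulVec x j) = ∑ i, Cᵀ j i * x i from rfl, ← Finset.sum_neg_distrib]
      exact Finset.sum_congr rfl fun i _ => by ring
    rw [h1] at h0
    exact h0
  have hgle : g ⬝ᵥ x ≤ hstar := hxle (Sum.inr (Sum.inr (Sum.inr ())))
  have hCeq : Cᵀ.mulVec x = -e := by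
    funext j
    have h1 := hC1 j
    have h2 := hC2 j
    simp only [Pi.neg_apply]
    linarith
  obtain ⟨y₀, hy₀⟩ := hYne
  have hxX : x ∈ X := by rw [hX]; exact ⟨hA, hx0⟩
  have hle := hmin.2 (Set.mem_image2_of_mem hxX hy₀)
  rw [hzcomp x hCeq y₀] at hle
  exact ⟨x, hA, hCeq, le_antisymm hgle hle, hx0⟩
end

section
/- Assume X and Y are nonempty and bounded, and let h* be the minimum of z over X × Y. If the system {−Aᵀu − C y ≤ g, a·u − e·y < −h*, u ≥ 0} has a solution (u, y) ∈ ℝ^q × ℝ^m, then there exists y* ∈ Y such that the system {−Aᵀu ≤ C y* + g, a·u < e·y* − h*, u ≥ 0} has no solution u; moreover, for any y* ∈ Y with this property the system {A x ≤ a, x·(C y* + g) ≤ h* − e·y*, x ≥ 0} has a solution x, and any such solution x* together with y* satisfies z(x*, y*) = h*, i.e. (x*, y*) is an optimal solution of the disjoint bilinear programming problem. -/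
open Matrix Finset

/-- Carathéodory-type lemma for cones: any nonneg combination can be rewritten as a
nonneg combination supported on a linearly independent subfamily. -/
lemma cone_cara {ι : Type*} [Fintype ι] [DecidableEq ι] {F : Type*} [AddCommGroup F]
    [Module ℝ F] (v : ι → F) (s : Finset ι) :
    ∀ c : ι → ℝ, 0 ≤ c → (∀ i ∉ s, c i = 0) →
    ∃ (t : Finset ι) (c' : ι → ℝ), t ⊆ s ∧ 0 ≤ c' ∧ (∀ i ∉ t, c' i = 0) ∧
      ∑ i, c' i • v i = ∑ i, c i • v i ∧
      LinearIndependent ℝ (fun i : t => v (i : ι)) := by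
  induction s using Finset.strongInductionOn with
  | _ s ih =>
  intro c hc hcs
  by_cases hli : LinearIndependent ℝ (fun i : s => v (i : ι))
  · exact ⟨s, c, subset_rfl, hc, hcs, rfl, hli⟩
  obtain ⟨d, hd0, j₀, hj₀⟩ := Fintype.not_linearIndependent_iff.mp hli
  -- extend a coefficient family on s to ι
  have hext : ∀ d : s → ℝ,
      ∑ i, (fun i => if h : i ∈ s then d ⟨i, h⟩ else 0) i • v i = ∑ i : s, d i • v i := by
    intro d
    rw [show ∑ i : ι, (fun i => if h : i ∈ s then d ⟨i, h⟩ else 0) i • v i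
        = ∑ i ∈ s, (if h : i ∈ s then d ⟨i, h⟩ else 0) • v i from
      (Finset.sum_subset (Finset.subset_univ s) (fun i _ hi => by simp [hi])).symm,
      ← Finset.sum_attach s (fun i => (if h : i ∈ s then d ⟨i, h⟩ else 0) • v i)]
    exact Finset.sum_congr rfl fun i _ => by simp [i.2]
  -- get a relation with a positive coefficient somewhere in s
  obtain ⟨e, hes, hesum, i₀, hi₀s, hi₀pos⟩ :
      ∃ e : ι → ℝ, (∀ i ∉ s, e i = 0) ∧ ∑ i, e i • v i = 0 ∧ ∃ i ∈ s, 0 < e i := by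
    set e₁ : ι → ℝ := fun i => if h : i ∈ s then d ⟨i, h⟩ else 0 with he₁
    have h1 : ∀ i ∉ s, e₁ i = 0 := fun i hi => by simp [he₁, hi]
    have h2 : ∑ i, e₁ i • v i = 0 := by rw [he₁, hext d, hd0]
    by_cases hp : ∃ i ∈ s, 0 < e₁ i
    · exact ⟨e₁, h1, h2, hp⟩
    · refine ⟨-e₁, fun i hi => by simp [h1 i hi], by
        simpa [neg_smul, Finset.sum_neg_distrib] using congrArg Neg.neg h2, j₀, j₀.2, ?_⟩
      push_neg at hp
      have := hp j₀ j₀.2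
      have he₁j₀ : e₁ (j₀ : ι) = d j₀ := by simp [he₁, j₀.2]
      simp only [Pi.neg_apply, he₁j₀] at *
      cases lt_or_eq_of_le this with
      | inl h => linarith
      | inr h => exact absurd h hj₀
  -- minimize the ratio
  have hPne : (s.filter (fun i => 0 < e i)).Nonempty := ⟨i₀, by simp [hi₀s, hi₀pos]⟩
  obtain ⟨i₁, hi₁P, hi₁min⟩ := Finset.exists_min_image _ (fun i => c i / e i) hPne
  have hi₁s : i₁ ∈ s := (Finset.mem_filter.mp hi₁P).1
  have hi₁pos : 0 < e i₁ := (Finset.mem_filter.mp hi₁P).2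
  set r : ℝ := c i₁ / e i₁ with hr
  have hr0 : 0 ≤ r := div_nonneg (hc i₁) hi₁pos.le
  set c₂ : ι → ℝ := fun i => c i - r * e i with hc₂
  have hc₂0 : 0 ≤ c₂ := by
    intro i
    by_cases hei : 0 < e i
    · have his : i ∈ s := by
        by_contra h
        rw [hes i h] at hei; exact lt_irrefl 0 hei
      have := hi₁min i (Finset.mem_filter.mpr ⟨his, hei⟩)
      have : r * e i ≤ c i := by
        rw [hr] at this ⊢
        exact (le_div_iff₀ hei).mp this
      simp only [hc₂, Pi.zero_apply]; linarith
    · push_neg at hei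
      have : r * e i ≤ 0 := mul_nonpos_of_nonneg_of_nonpos hr0 hei
      have := hc i
      simp only [hc₂, Pi.zero_apply] at *; linarith
  have hc₂i₁ : c₂ i₁ = 0 := by
    simp only [hc₂, hr]
    field_simp
    ring
  have hc₂supp : ∀ i ∉ s.erase i₁, c₂ i = 0 := by
    intro i hi
    rw [Finset.mem_erase] at hi
    push_neg at hi
    by_cases h : i = i₁
    · rw [h]; exact hc₂i₁
    · have hns := hi h
      simp [hc₂, hes i hns, hcs i hns]
  have hc₂sum : ∑ i, c₂ i • v i = ∑ i, c i • v i := by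
    have h0 : ∑ i : ι, (r * e i) • v i = 0 := by
      have heq : ∀ i : ι, (r * e i) • v i = r • (e i • v i) := fun i => mul_smul r (e i) (v i)
      simp_rw [heq, ← Finset.smul_sum, hesum, smul_zero]
    simp only [hc₂, sub_smul, Finset.sum_sub_distrib, h0, sub_zero]
  obtain ⟨t, c', hts, h1, h2, h3, h4⟩ :=
    ih (s.erase i₁) (Finset.erase_ssubset hi₁s) c₂ hc₂0 hc₂supp
  exact ⟨t, c', hts.trans (Finset.erase_subset _ _), h1, h2, h3.trans hc₂sum, h4⟩

lemma sum_extend_zero {ι : Type*} [Fintype ι] [DecidableEq ι] {F : Type*} [AddCommGroup F]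
    [Module ℝ F] (v : ι → F) (s : Finset ι) (d : {x // x ∈ s} → ℝ) :
    ∑ i : ι, (if h : i ∈ s then d ⟨i, h⟩ else 0) • v i = ∑ i : {x // x ∈ s}, d i • v (i : ι) := by
  rw [show ∑ i : ι, (if h : i ∈ s then d ⟨i, h⟩ else 0) • v i
      = ∑ i ∈ s, (if h : i ∈ s then d ⟨i, h⟩ else 0) • v i from
    (Finset.sum_subset (Finset.subset_univ s) (fun i _ hi => by simp [hi])).symm,
    ← Finset.sum_attach s (fun i => (if h : i ∈ s then d ⟨i, h⟩ else 0) • v i)]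
  exact Finset.sum_congr rfl fun i _ => by simp [i.2]

lemma cone_closed {ι κ : Type*} [Fintype ι] [DecidableEq ι] [Fintype κ] (v : ι → (κ → ℝ)) :
    IsClosed {x : κ → ℝ | ∃ c : ι → ℝ, 0 ≤ c ∧ x = ∑ i, c i • v i} := by
  classical
  have caraall := cone_cara v Finset.univ
  have key : {x : κ → ℝ | ∃ c : ι → ℝ, 0 ≤ c ∧ x = ∑ i, c i • v i}
      = ⋃ (t : {t : Finset ι // LinearIndependent ℝ (fun i : t => v (i : ι))}),
        (fun c : {x // x ∈ t.1} → ℝ => ∑ i, c i • v (i : ι)) '' {c | 0 ≤ c} := by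
    ext x
    constructor
    · rintro ⟨c, hc, rfl⟩
      obtain ⟨t, c', _, h1, h2, h3, h4⟩ := caraall c hc (fun i hi => absurd (mem_univ i) hi)
      refine Set.mem_iUnion.mpr ⟨⟨t, h4⟩, ⟨fun i => c' i, fun i => h1 _, ?_⟩⟩
      show ∑ i : {x // x ∈ t}, c' (i : ι) • v (i : ι) = ∑ i : ι, c i • v i
      rw [← h3, ← sum_extend_zero v t (fun i => c' i)]
      exact Finset.sum_congr rfl fun i _ => by
        by_cases h : i ∈ t
        · simp [h]
        · simp [h, h2 i h]
    · intro hx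
      obtain ⟨t, c, hc, rfl⟩ := Set.mem_iUnion.mp hx
      refine ⟨fun i => if h : i ∈ t.1 then c ⟨i, h⟩ else 0, fun i => ?_, ?_⟩
      · by_cases h : i ∈ t.1
        · simp only [dif_pos h]; exact hc ⟨i, h⟩
        · simp [h]
      · exact (sum_extend_zero v t.1 c).symm
  rw [key]
  refine isClosed_iUnion_of_finite fun t => ?_
  let L : ({x // x ∈ t.1} → ℝ) →ₗ[ℝ] (κ → ℝ) :=
    { toFun := fun c => ∑ i, c i • v (i : ι)
      map_add' := fun c d => by simp [add_smul, Finset.sum_add_distrib]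
      map_smul' := fun r c => by simp [Finset.smul_sum, smul_smul] }
  have hker : LinearMap.ker L = ⊥ := by
    rw [LinearMap.ker_eq_bot']
    intro c hc
    funext i
    exact Fintype.linearIndependent_iff.mp t.2 c hc i
  have hclosed : IsClosed {c : {x // x ∈ t.1} → ℝ | 0 ≤ c} := by
    have : {c : {x // x ∈ t.1} → ℝ | 0 ≤ c} = ⋂ i, {c | 0 ≤ c i} := by
      ext c; simp [Pi.le_def, Set.mem_iInter]
    rw [this]
    exact isClosed_iInter fun i => isClosed_le continuous_const (continuous_apply i)
  exact (L.isClosedEmbedding_of_injective hker).isClosedMap _ hclosed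

/-- Farkas' lemma (inequality form). -/
lemma farkas {ι κ : Type*} [Fintype ι] [DecidableEq ι] [Fintype κ] [DecidableEq κ]
    (M : Matrix ι κ ℝ) (d : ι → ℝ)
    (h : ¬ ∃ x : κ → ℝ, M.mulVec x ≤ d ∧ 0 ≤ x) :
    ∃ w : ι → ℝ, 0 ≤ w ∧ 0 ≤ Mᵀ.mulVec w ∧ d ⬝ᵥ w < 0 := by
  classical
  set v : κ ⊕ ι → (ι → ℝ) := Sum.elim (fun j => Mᵀ j) (fun i => Pi.single i 1) with hv
  set K : Set (ι → ℝ) := {x | ∃ c : κ ⊕ ι → ℝ, 0 ≤ c ∧ x = ∑ p, c p • v p} with hK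
  have hKclosed : IsClosed K := cone_closed v
  have hKconv : Convex ℝ K := by
    rintro x ⟨cx, hcx, rfl⟩ y ⟨cy, hcy, rfl⟩ α β hα hβ _
    refine ⟨fun p => α * cx p + β * cy p,
      fun p => by have := hcx p; have := hcy p; simp at *; positivity, ?_⟩
    simp only [add_smul, mul_smul, Finset.sum_add_distrib, Finset.smul_sum]
  have hgen : ∀ p, v p ∈ K := by
    intro p
    refine ⟨fun p' => if p' = p then 1 else 0, fun p' => by positivity, ?_⟩
    simp [ite_smul, Finset.sum_ite_eq']
  have hscale : ∀ x ∈ K, ∀ t : ℝ, 0 ≤ t → t • x ∈ K := by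
    rintro x ⟨c, hc, rfl⟩ t ht
    refine ⟨fun p => t * c p, fun p => mul_nonneg ht (hc p), ?_⟩
    simp only [Finset.smul_sum, mul_smul]
  have hdK : d ∉ K := by
    rintro ⟨c, hc, hd⟩
    apply h
    refine ⟨fun j => c (Sum.inl j), fun i => ?_, fun j => hc (Sum.inl j)⟩
    have hdi : d i = M.mulVec (fun j => c (Sum.inl j)) i + c (Sum.inr i) := by
      rw [hd, Finset.sum_apply, Fintype.sum_sum_type]
      congr 1
      · simp only [Pi.smul_apply, smul_eq_mul]
        exact Finset.sum_congr rfl fun j _ => by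
          simp [hv, Matrix.mulVec, dotProduct, mul_comm]
      · simp only [Pi.smul_apply, smul_eq_mul, hv, Sum.elim_inr]
        rw [Finset.sum_eq_single i (fun b _ hb => by simp [Pi.single_apply, hb])
          (fun hb => absurd (mem_univ i) hb)]
        simp
    have h2 := hc (Sum.inr i)
    simp only [Pi.zero_apply] at h2
    rw [hdi]
    linarith
  
  obtain ⟨f, u, hfK, hfd⟩ := geometric_hahn_banach_closed_point hKconv hKclosed hdK
  have h0K : (0 : ι → ℝ) ∈ K := ⟨0, le_refl 0, by simp⟩
  have hu0 : 0 < u := by have := hfK 0 h0K; simpa using this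
  have hfnonpos : ∀ x ∈ K, f x ≤ 0 := by
    intro x hx
    by_contra hfx
    push_neg at hfx
    have ht : (0:ℝ) ≤ (u + 1) / f x := div_nonneg (by linarith) hfx.le
    have h2 := hfK _ (hscale x hx _ ht)
    rw [_root_.map_smul, smul_eq_mul, div_mul_cancel₀ _ (ne_of_gt hfx)] at h2
    linarith
  set w : ι → ℝ := fun i => -f (Pi.single i 1) with hw
  have hfrepr : ∀ y : ι → ℝ, f y = -(y ⬝ᵥ w) := by
    intro y
    have hy : y = ∑ i, y i • (Pi.single i 1 : ι → ℝ) := by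
      conv_lhs => rw [← Finset.univ_sum_single y]
      exact Finset.sum_congr rfl fun i _ => by
        funext j
        simp [Pi.single_apply]
    calc f y = f (∑ i, y i • (Pi.single i 1 : ι → ℝ)) := by rw [← hy]
    _ = ∑ i, y i * f (Pi.single i 1) := by
        rw [map_sum]
        exact Finset.sum_congr rfl fun i _ => by rw [_root_.map_smul, smul_eq_mul]
    _ = -(y ⬝ᵥ w) := by
        simp only [hw, dotProduct, mul_neg, ← Finset.sum_neg_distrib, neg_neg]
  refine ⟨w, fun i => ?_, fun j => ?_, ?_⟩
  · have h1 := hfnonpos _ (hgen (Sum.inr i))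
    simp only [hv, Sum.elim_inr] at h1
    simp only [hw, Pi.zero_apply]
    linarith
  · have h1 := hfnonpos _ (hgen (Sum.inl j))
    simp only [hv, Sum.elim_inl] at h1
    rw [hfrepr] at h1
    have h2 : Mᵀ.mulVec w j = Mᵀ j ⬝ᵥ w := rfl
    simp only [Pi.zero_apply]
    rw [h2]
    linarith
  · rw [hfrepr d] at hfd
    linarith

/-- Theorem 3, property 2) of the paper. -/
theorem stmt_8
    (n m q l : ℕ) (hn : 0 < n) (hm : 0 < m) (hq : 0 < q) (hl : 0 < l)
    (C : Matrix (Fin n) (Fin m) ℝ) (A : Matrix (Fin q) (Fin n) ℝ)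
    (B : Matrix (Fin l) (Fin m) ℝ)
    (a : Fin q → ℝ) (b : Fin l → ℝ) (g : Fin n → ℝ) (e : Fin m → ℝ)
    (z : (Fin n → ℝ) → (Fin m → ℝ) → ℝ)
    (hz : ∀ x y, z x y = x ⬝ᵥ C.mulVec y + g ⬝ᵥ x + e ⬝ᵥ y)
    (X : Set (Fin n → ℝ)) (Y : Set (Fin m → ℝ))
    (hX : X = {x | A.mulVec x ≤ a ∧ 0 ≤ x})
    (hY : Y = {y | B.mulVec y ≤ b ∧ 0 ≤ y})
    (hXne : X.Nonempty) (hYne : Y.Nonempty)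
    (hXbd : Bornology.IsBounded X) (hYbd : Bornology.IsBounded Y)
    (hstar : ℝ) (hmin : IsLeast (Set.image2 z X Y) hstar)
    (hcons : ∃ (u : Fin q → ℝ) (y : Fin m → ℝ),
        -(Aᵀ.mulVec u) - C.mulVec y ≤ g ∧ a ⬝ᵥ u - e ⬝ᵥ y < -hstar ∧ 0 ≤ u) :
    (∃ ys ∈ Y, ¬ ∃ u : Fin q → ℝ,
        -(Aᵀ.mulVec u) ≤ C.mulVec ys + g ∧ a ⬝ᵥ u < e ⬝ᵥ ys - hstar ∧ 0 ≤ u) ∧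
    (∀ ys ∈ Y,
      (¬ ∃ u : Fin q → ℝ,
        -(Aᵀ.mulVec u) ≤ C.mulVec ys + g ∧ a ⬝ᵥ u < e ⬝ᵥ ys - hstar ∧ 0 ≤ u) →
      (∃ x : Fin n → ℝ,
        A.mulVec x ≤ a ∧ x ⬝ᵥ (C.mulVec ys + g) ≤ hstar - e ⬝ᵥ ys ∧ 0 ≤ x) ∧
      (∀ x : Fin n → ℝ,
        A.mulVec x ≤ a → x ⬝ᵥ (C.mulVec ys + g) ≤ hstar - e ⬝ᵥ ys → 0 ≤ x →
        z x ys = hstar)) := by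
  classical
  obtain ⟨x0, hx0, y0, hy0, hz0⟩ := hmin.1
  have hXmem : ∀ x ∈ X, A.mulVec x ≤ a ∧ 0 ≤ x := fun x hx => by rw [hX] at hx; exact hx
  have hzalt : ∀ x y, z x y = x ⬝ᵥ (C.mulVec y + g) + e ⬝ᵥ y := by
    intro x y
    rw [hz, dotProduct_add, dotProduct_comm x g]
  have key : ∀ (ys : Fin m → ℝ) (u : Fin q → ℝ), -(Aᵀ.mulVec u) ≤ C.mulVec ys + g →
      a ⬝ᵥ u < e ⬝ᵥ ys - hstar → 0 ≤ u → ∀ x ∈ X,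
      hstar - e ⬝ᵥ ys < x ⬝ᵥ (C.mulVec ys + g) := by
    intro ys u h1 h2 h3 x hx
    obtain ⟨hAx, hx0'⟩ := hXmem x hx
    have s1 : x ⬝ᵥ (-(Aᵀ.mulVec u)) ≤ x ⬝ᵥ (C.mulVec ys + g) :=
      dotProduct_le_dotProduct_of_nonneg_left h1 hx0'
    have s2 : x ⬝ᵥ (Aᵀ.mulVec u) = A.mulVec x ⬝ᵥ u := by
      rw [Matrix.dotProduct_mulVec, Matrix.vecMul_transpose]
    have s3 : A.mulVec x ⬝ᵥ u ≤ a ⬝ᵥ u :=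
      dotProduct_le_dotProduct_of_nonneg_right hAx h3
    have s4 : x ⬝ᵥ (-(Aᵀ.mulVec u)) = -(A.mulVec x ⬝ᵥ u) := by
      rw [dotProduct_neg, s2]
    linarith
  constructor
  · refine ⟨y0, hy0, ?_⟩
    rintro ⟨u, h1, h2, h3⟩
    have hk := key y0 u h1 h2 h3 x0 hx0
    have hz0' := hzalt x0 y0
    rw [hz0] at hz0'
    linarith
  · intro ys hys hno
    have hlb : ∀ x ∈ X, hstar ≤ z x ys := fun x hx => hmin.2 (Set.mem_image2_of_mem hx hys)
    set c : Fin n → ℝ := C.mulVec ys + g with hc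
    set β : ℝ := hstar - e ⬝ᵥ ys with hβ
    constructor
    · by_contra hnox
      push_neg at hnox
      set M : Matrix (Fin q ⊕ Unit) (Fin n) ℝ := Matrix.of (Sum.elim A (fun _ => c)) with hM
      set dd : Fin q ⊕ Unit → ℝ := Sum.elim a (fun _ => β) with hdd
      have hinf : ¬ ∃ x : Fin n → ℝ, M.mulVec x ≤ dd ∧ 0 ≤ x := by
        rintro ⟨x, hMx, hx0'⟩
        have hAx : A.mulVec x ≤ a := fun i => hMx (Sum.inl i)
        have hcx : c ⬝ᵥ x ≤ β := hMx (Sum.inr ())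
        exact (hnox x hAx (by rwa [dotProduct_comm])) hx0'
      obtain ⟨w, hw0, hMtw, hdw⟩ := farkas M dd hinf
      set u : Fin q → ℝ := fun i => w (Sum.inl i) with hu
      set t : ℝ := w (Sum.inr ()) with htdef
      have hMt : ∀ j, Mᵀ.mulVec w j = Aᵀ.mulVec u j + t * c j := by
        intro j
        show (∑ p, Mᵀ j p * w p) = _
        rw [Fintype.sum_sum_type,
          Fintype.sum_unique (fun x : Unit => Mᵀ j (Sum.inr x) * w (Sum.inr x))]
        rw [show (∑ i, Mᵀ j (Sum.inl i) * w (Sum.inl i)) = Aᵀ.mulVec u j from rfl,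
          show Mᵀ j (Sum.inr ()) = c j from rfl, mul_comm (c j) (w (Sum.inr ()))]
      have hdw' : a ⬝ᵥ u + β * t < 0 := by
        have hsum : dd ⬝ᵥ w = a ⬝ᵥ u + β * t := by
          show (∑ p, dd p * w p) = _
          rw [Fintype.sum_sum_type,
            Fintype.sum_unique (fun x : Unit => dd (Sum.inr x) * w (Sum.inr x))]
          rfl
        rw [hsum] at hdw
        exact hdw
      have ht0 : 0 ≤ t := hw0 (Sum.inr ())
      have hu0 : 0 ≤ u := fun i => hw0 (Sum.inl i)
      rcases eq_or_lt_of_le ht0 with ht | ht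
      · -- t = 0 : contradiction with X nonempty
        obtain ⟨x1, hx1⟩ := hXne
        obtain ⟨hAx1, hx10⟩ := hXmem x1 hx1
        have hAtu : 0 ≤ Aᵀ.mulVec u := by
          intro j
          have := hMtw j
          rw [hMt j, ← ht] at this
          simpa using this
        have p1 : 0 ≤ x1 ⬝ᵥ Aᵀ.mulVec u := dotProduct_nonneg_of_nonneg hx10 hAtu
        have p2 : x1 ⬝ᵥ Aᵀ.mulVec u = A.mulVec x1 ⬝ᵥ u := by
          rw [Matrix.dotProduct_mulVec, Matrix.vecMul_transpose]
        have p3 : A.mulVec x1 ⬝ᵥ u ≤ a ⬝ᵥ u :=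
          dotProduct_le_dotProduct_of_nonneg_right hAx1 hu0
        have : β * t = 0 := by rw [← ht, mul_zero]
        linarith
      · -- t > 0 : contradiction with hno
        apply hno
        refine ⟨t⁻¹ • u, ?_, ?_, ?_⟩
        · intro j
          have h5 := hMtw j
          rw [hMt j] at h5
          simp only [Pi.zero_apply] at h5
          have h6 : (Aᵀ.mulVec (t⁻¹ • u)) j = t⁻¹ * (Aᵀ.mulVec u) j := by
            rw [Matrix.mulVec_smul]
            simp
          have h7 := mul_nonneg (inv_nonneg.mpr ht.le) h5
          rw [mul_add, ← mul_assoc, inv_mul_cancel₀ (ne_of_gt ht), one_mul] at h7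
          simp only [Pi.neg_apply, h6]
          linarith
        · have h8 : a ⬝ᵥ (t⁻¹ • u) = t⁻¹ * (a ⬝ᵥ u) := by
            rw [dotProduct_smul]
            simp
          have h9 : t⁻¹ * (a ⬝ᵥ u + β * t) < t⁻¹ * 0 :=
            mul_lt_mul_of_pos_left hdw' (inv_pos.mpr ht)
          rw [mul_zero, mul_add, mul_comm β t, ← mul_assoc, inv_mul_cancel₀ (ne_of_gt ht),
            one_mul] at h9
          rw [h8]
          rw [hβ] at h9
          linarith
        · intro i
          exact mul_nonneg (inv_nonneg.mpr ht.le) (hu0 i)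
    · intro x hAx hcx hx0'
      have hxX : x ∈ X := by rw [hX]; exact ⟨hAx, hx0'⟩
      have h1 := hlb x hxX
      have h2 := hzalt x ys
      linarith
end

section
/- Assume X and Y are nonempty and bounded, and let h ∈ ℝ. Then the system {−Aᵀu ≤ C y + g, a·u ≤ e·y − h, u ≥ 0} has a solution u ∈ ℝ^q for every y ∈ ℝ^m satisfying B y ≤ b, y ≥ 0, if and only if the system {−Bᵀv ≤ Cᵀx + e, b·v ≤ g·x − h, v ≥ 0} has a solution v ∈ ℝ^l for every x ∈ ℝ^n satisfying A x ≤ a, x ≥ 0. -/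
open Finset Matrix
open scoped RealInnerProductSpace


lemma carath_cone {ι : Type*} [Fintype ι] {E : Type*} [AddCommGroup E] [Module ℝ E]
    (G : ι → E) (s : Finset ι) :
    ∀ μ : ι → ℝ, (∀ i, 0 ≤ μ i) →
      ∃ t : Finset ι, (LinearIndependent ℝ (fun i : t => G i)) ∧
        ∃ ν : ι → ℝ, (∀ i, 0 ≤ ν i) ∧ ∑ i ∈ s, μ i • G i = ∑ i ∈ t, ν i • G i := by
  classical
  induction s using Finset.strongInductionOn with
  | _ s ih =>
    intro μ hμ
    by_cases hli : LinearIndependent ℝ (fun i : s => G i)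
    · exact ⟨s, hli, μ, hμ, rfl⟩
    · have key : ∀ d : ι → ℝ, (∑ i ∈ s, d i • G i = 0) → (∃ i ∈ s, 0 < d i) →
          ∃ t : Finset ι, (LinearIndependent ℝ (fun i : t => G i)) ∧
            ∃ ν : ι → ℝ, (∀ i, 0 ≤ ν i) ∧ ∑ i ∈ s, μ i • G i = ∑ i ∈ t, ν i • G i := by
        intro d hd0 ⟨i₀, hi₀s, hi₀⟩
        set T : Finset ι := s.filter (fun i => 0 < d i) with hT
        have hTne : T.Nonempty := ⟨i₀, by simp [hT, hi₀s, hi₀]⟩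
        set r : ℝ := T.inf' hTne (fun i => μ i / d i) with hr
        obtain ⟨i₁, hi₁T, hi₁⟩ := T.exists_mem_eq_inf' hTne (fun i => μ i / d i)
        have hi₁s : i₁ ∈ s := (Finset.mem_filter.mp hi₁T).1
        have hdi₁ : 0 < d i₁ := (Finset.mem_filter.mp hi₁T).2
        have hrle : ∀ i ∈ T, r ≤ μ i / d i := fun i hi => Finset.inf'_le _ hi
        have hr0 : 0 ≤ r := by
          rw [hr, hi₁]
          exact div_nonneg (hμ i₁) hdi₁.le
        set ν : ι → ℝ := fun i => if i ∈ s then μ i - r * d i else 0 with hν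
        have hν0 : ∀ i, 0 ≤ ν i := by
          intro i
          simp only [hν]
          split
          · rename_i his
            by_cases hdi : 0 < d i
            · have := hrle i (Finset.mem_filter.mpr ⟨his, hdi⟩)
              rw [le_div_iff₀ hdi] at this
              linarith
            · push_neg at hdi
              nlinarith [hμ i]
          · exact le_refl 0
        have hνi₁ : ν i₁ = 0 := by
          have : r = μ i₁ / d i₁ := by rw [hr, hi₁]
          simp only [hν, if_pos hi₁s, this]
          field_simp
          ring
        have hsum : ∑ i ∈ s, μ i • G i = ∑ i ∈ s, ν i • G i := by
          have : ∑ i ∈ s, ν i • G i = ∑ i ∈ s, (μ i • G i - (r * d i) • G i) := by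
            apply Finset.sum_congr rfl
            intro i hi
            rw [hν]
            simp only [if_pos hi, sub_smul]
          rw [this, Finset.sum_sub_distrib]
          have : ∑ i ∈ s, (r * d i) • G i = r • ∑ i ∈ s, d i • G i := by
            rw [Finset.smul_sum]
            exact Finset.sum_congr rfl fun i _ => by rw [smul_smul]
          rw [this, hd0, smul_zero, sub_zero]
        have hsum2 : ∑ i ∈ s, ν i • G i = ∑ i ∈ s.erase i₁, ν i • G i := by
          rw [← Finset.sum_erase_add s _ hi₁s, hνi₁, zero_smul, add_zero]
        obtain ⟨t, ht, ν', hν', hsum3⟩ := ih (s.erase i₁) (Finset.erase_ssubset hi₁s) ν hν0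
        exact ⟨t, ht, ν', hν', by rw [hsum, hsum2, hsum3]⟩
      obtain ⟨g, hg0, i₀, hgi₀⟩ := Fintype.not_linearIndependent_iff.mp hli
      set d : ι → ℝ := fun i => if h : i ∈ s then g ⟨i, h⟩ else 0 with hdd
      have hd0 : ∑ i ∈ s, d i • G i = 0 := by
        rw [← hg0, ← Finset.sum_attach s (fun i => d i • G i)]
        apply Finset.sum_congr rfl
        intro i _
        simp [hdd, i.2]
      have hdi₀ : d (i₀ : ι) ≠ 0 := by simp [hdd, i₀.2, hgi₀]
      rcases lt_or_gt_of_ne hdi₀ with hlt | hgt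
      · have hd0' : ∑ i ∈ s, (-d) i • G i = 0 := by
          simp only [Pi.neg_apply, neg_smul, Finset.sum_neg_distrib, hd0, neg_zero]
        exact key (-d) hd0' ⟨i₀, i₀.2, by simpa using hlt⟩
      · exact key d hd0 ⟨i₀, i₀.2, hgt⟩

lemma cone_isClosed {ι : Type*} [Fintype ι] {E : Type*} [NormedAddCommGroup E]
    [NormedSpace ℝ E] [FiniteDimensional ℝ E] (G : ι → E) :
    IsClosed {x : E | ∃ μ : ι → ℝ, (∀ i, 0 ≤ μ i) ∧ x = ∑ i, μ i • G i} := by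
  classical
  have hrw : {x : E | ∃ μ : ι → ℝ, (∀ i, 0 ≤ μ i) ∧ x = ∑ i, μ i • G i} =
      ⋃ t : Finset ι, {x : E | (LinearIndependent ℝ (fun i : t => G i)) ∧
        ∃ ν : t → ℝ, (∀ i, 0 ≤ ν i) ∧ x = ∑ i : t, ν i • G (i : ι)} := by
    ext x
    simp only [Set.mem_setOf_eq, Set.mem_iUnion]
    constructor
    · rintro ⟨μ, hμ, rfl⟩
      obtain ⟨t, ht, ν, hν, hsum⟩ := carath_cone G Finset.univ μ hμ
      refine ⟨t, ht, fun i => ν i, fun i => hν i, ?_⟩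
      rw [hsum, ← Finset.sum_coe_sort t (fun i => ν i • G i)]
    · rintro ⟨t, ht, ν, hν, rfl⟩
      refine ⟨fun i => if h : i ∈ t then ν ⟨i, h⟩ else 0, ?_, ?_⟩
      · intro i; dsimp only; split
        · exact hν _
        · exact le_refl 0
      · rw [← Finset.sum_subset (Finset.subset_univ t) (by intro i _ hi; simp [hi]),
          ← Finset.sum_attach t (fun i => (if h : i ∈ t then ν ⟨i, h⟩ else 0) • G i)]
        apply Finset.sum_congr rfl
        intro i _
        rw [dif_pos i.2]
  rw [hrw]
  apply isClosed_iUnion_of_finite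
  intro t
  by_cases ht : LinearIndependent ℝ (fun i : t => G i)
  · let f : (t → ℝ) →ₗ[ℝ] E :=
      { toFun := fun ν => ∑ i : t, ν i • G (i : ι)
        map_add' := by intro a c; simp [add_smul, Finset.sum_add_distrib]
        map_smul' := by intro c a; simp [Finset.smul_sum, smul_smul] }
    have hker : LinearMap.ker f = ⊥ := by
      rw [LinearMap.ker_eq_bot']
      intro ν hν
      have := Fintype.linearIndependent_iff.mp ht ν hν
      funext i
      exact this i
    have hce := LinearMap.isClosedEmbedding_of_injective hker
    have horth : IsClosed {ν : t → ℝ | ∀ i, 0 ≤ ν i} := by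
      have : {ν : t → ℝ | ∀ i, 0 ≤ ν i} = ⋂ i, {ν : t → ℝ | 0 ≤ ν i} :=
        by ext; simp
      rw [this]
      exact isClosed_iInter fun i => isClosed_le continuous_const (continuous_apply i)
    have himg : {x : E | (LinearIndependent ℝ (fun i : t => G i)) ∧
        ∃ ν : t → ℝ, (∀ i, 0 ≤ ν i) ∧ x = ∑ i : t, ν i • G (i : ι)} =
        f '' {ν : t → ℝ | ∀ i, 0 ≤ ν i} := by
      ext x
      simp only [Set.mem_setOf_eq, Set.mem_image]
      constructor
      · rintro ⟨-, ν, hν, rfl⟩; exact ⟨ν, hν, rfl⟩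
      · rintro ⟨ν, hν, rfl⟩; exact ⟨ht, ν, hν, rfl⟩
    rw [himg]
    exact hce.isClosedMap _ horth
  · have : {x : E | (LinearIndependent ℝ (fun i : t => G i)) ∧
        ∃ ν : t → ℝ, (∀ i, 0 ≤ ν i) ∧ x = ∑ i : t, ν i • G (i : ι)} = ∅ := by
      ext x; simp [ht]
    rw [this]
    exact isClosed_empty


lemma dot_mono_left {k : ℕ} {x f f' : Fin k → ℝ} (hx : 0 ≤ x) (hff : f ≤ f') :
    x ⬝ᵥ f ≤ x ⬝ᵥ f' :=
  Finset.sum_le_sum fun i _ => mul_le_mul_of_nonneg_left (hff i) (hx i)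

lemma dot_mono_right {k : ℕ} {u f f' : Fin k → ℝ} (hu : 0 ≤ u) (hff : f ≤ f') :
    f ⬝ᵥ u ≤ f' ⬝ᵥ u :=
  Finset.sum_le_sum fun i _ => mul_le_mul_of_nonneg_right (hff i) (hu i)

lemma key_farkas (k l : ℕ) (Bm : Matrix (Fin l) (Fin k) ℝ) (bv : Fin l → ℝ)
    (c : Fin k → ℝ) (t : ℝ)
    (hne : ∃ y : Fin k → ℝ, Bm.mulVec y ≤ bv ∧ 0 ≤ y)
    (hbd : Bornology.IsBounded {y : Fin k → ℝ | Bm.mulVec y ≤ bv ∧ 0 ≤ y})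
    (hub : ∀ y : Fin k → ℝ, Bm.mulVec y ≤ bv → 0 ≤ y → c ⬝ᵥ y ≤ t) :
    ∃ v : Fin l → ℝ, 0 ≤ v ∧ c ≤ Bmᵀ.mulVec v ∧ bv ⬝ᵥ v ≤ t := by
  classical
  set E := EuclideanSpace ℝ (Fin k ⊕ Unit) with hE
  -- generators
  set G : (Fin l ⊕ (Fin k ⊕ Unit)) → E := Sum.elim
    (fun i => WithLp.toLp 2 (Sum.elim (fun j' => Bm i j') (fun _ => bv i) : (Fin k ⊕ Unit) → ℝ))
    (Sum.elim
      (fun j₀ => WithLp.toLp 2 (Sum.elim (fun j' => if j' = j₀ then (-1 : ℝ) else 0) (fun _ => 0) :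
        (Fin k ⊕ Unit) → ℝ))
      (fun _ => WithLp.toLp 2 (Sum.elim (fun _ => (0 : ℝ)) (fun _ => 1) : (Fin k ⊕ Unit) → ℝ))) with hG
  have hcl : IsClosed {x : E | ∃ μ : (Fin l ⊕ (Fin k ⊕ Unit)) → ℝ, (∀ i, 0 ≤ μ i) ∧ x = ∑ i, μ i • G i} :=
    cone_isClosed G
  -- the cone generated by G
  set Kcone : ConvexCone ℝ E :=
    { carrier := {x : E | ∃ μ : (Fin l ⊕ (Fin k ⊕ Unit)) → ℝ, (∀ i, 0 ≤ μ i) ∧ x = ∑ i, μ i • G i}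
      smul_mem' := by
        rintro cc hcc x ⟨μ, hμ, rfl⟩
        refine ⟨fun i => cc * μ i, fun i => mul_nonneg hcc.le (hμ i), ?_⟩
        rw [Finset.smul_sum]
        exact Finset.sum_congr rfl fun i _ => by rw [smul_smul]
      add_mem' := by
        rintro x ⟨μ, hμ, rfl⟩ y ⟨ν, hν, rfl⟩
        refine ⟨fun i => μ i + ν i, fun i => add_nonneg (hμ i) (hν i), ?_⟩
        rw [← Finset.sum_add_distrib]
        exact Finset.sum_congr rfl fun i _ => (add_smul (μ i) (ν i) (G i)).symm } with hKcone
  have hKmem : ∀ x : E, x ∈ Kcone ↔ ∃ μ : (Fin l ⊕ (Fin k ⊕ Unit)) → ℝ,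
      (∀ i, 0 ≤ μ i) ∧ x = ∑ i, μ i • G i := fun x => Iff.rfl
  have hne0 : (0 : E) ∈ Kcone := ⟨0, fun i => le_refl 0, by simp⟩
  -- generators are in the cone
  have hgen : ∀ i, G i ∈ Kcone := by
    intro i
    refine ⟨fun i' => if i' = i then 1 else 0, fun i' => by positivity, ?_⟩
    rw [Finset.sum_eq_single i]
    · simp
    · intro b _ hb; simp [hb]
    · intro hb; exact absurd (Finset.mem_univ i) hb
  -- the target vector
  set p : E := WithLp.toLp 2 (Sum.elim c (fun _ => t) : (Fin k ⊕ Unit) → ℝ) with hp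
  have hmem : p ∈ Kcone := by
    by_contra hpn
    obtain ⟨y', hy1, hy2⟩ :=
      ProperCone.hyperplane_separation' ({ toSubmodule := Kcone.toPointedCone hne0, isClosed' := hcl } : ProperCone ℝ E) hpn
    set z : Fin k → ℝ := fun j => -(y' (Sum.inl j)) with hz
    set μ0 : ℝ := y' (Sum.inr ()) with hμ0
    have hinner : ∀ x : E, inner ℝ x y' = ∑ j, x j * y' j := by
      intro x
      rw [PiLp.inner_apply]
      simp [RCLike.inner_apply, conj_trivial, mul_comm]
    have hμ0pos : 0 ≤ μ0 := by
      have := hy1 _ (hgen (Sum.inr (Sum.inr ())))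
      rw [hinner] at this
      simpa [hG, PiLp.toLp_apply, Fintype.sum_sum_type] using this
    have hzpos : ∀ j, 0 ≤ z j := by
      intro j
      have := hy1 _ (hgen (Sum.inr (Sum.inl j)))
      rw [hinner] at this
      simp only [hG, PiLp.toLp_apply, Sum.elim_inr, Sum.elim_inl, Fintype.sum_sum_type] at this
      rw [Finset.sum_eq_single j (by intro b _ hb; simp [hb]) (by simp)] at this
      simpa [hz] using this
    have hrow : ∀ i, Bm.mulVec z i ≤ bv i * μ0 := by
      intro i
      have := hy1 _ (hgen (Sum.inl i))
      rw [hinner] at this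
      simp only [hG, PiLp.toLp_apply, Sum.elim_inl, Sum.elim_inr, Fintype.sum_sum_type] at this
      have hmv : Bm.mulVec z i = -∑ j, Bm i j * y' (Sum.inl j) := by
        rw [← Finset.sum_neg_distrib]
        simp [Matrix.mulVec, dotProduct, hz, mul_neg]
      simp only [Finset.univ_unique, Finset.sum_singleton] at this
      nlinarith [this]
    have hobj : t * μ0 < c ⬝ᵥ z := by
      rw [hinner] at hy2
      simp only [hp, PiLp.toLp_apply, Fintype.sum_sum_type, Sum.elim_inl, Sum.elim_inr] at hy2
      simp only [Finset.univ_unique, Finset.sum_singleton] at hy2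
      have hcz : c ⬝ᵥ z = -∑ j, c j * y' (Sum.inl j) := by
        rw [← Finset.sum_neg_distrib]
        simp [dotProduct, hz, mul_neg]
      have hdef : y' (Sum.inr default) = μ0 := rfl
      rw [hdef] at hy2
      rw [hcz]
      linarith [hy2]
    rcases eq_or_lt_of_le hμ0pos with hμ00 | hμ0gt
    · -- μ0 = 0 : unbounded direction
      obtain ⟨y0, hy0B, hy0pos⟩ := hne
      obtain ⟨R, hR⟩ := hbd.exists_norm_le
      have hzne : z ≠ 0 := by
        intro h0
        have hz0 : c ⬝ᵥ z = 0 := by rw [h0]; simp [dotProduct]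
        rw [hz0, ← hμ00, mul_zero] at hobj
        exact lt_irrefl 0 hobj
      have hznorm : 0 < ‖z‖ := norm_pos_iff.mpr hzne
      set lam : ℝ := (R + ‖y0‖ + 1) / ‖z‖ with hlam
      have hRpos : 0 ≤ R := le_trans (norm_nonneg y0) (hR y0 ⟨hy0B, hy0pos⟩)
      have hlampos : 0 ≤ lam := div_nonneg (by linarith [norm_nonneg y0]) hznorm.le
      have hymem : Bm.mulVec (y0 + lam • z) ≤ bv ∧ 0 ≤ y0 + lam • z := by
        constructor
        · intro i
          rw [Matrix.mulVec_add, Matrix.mulVec_smul]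
          have h1 : Bm.mulVec z i ≤ 0 := by
            have := hrow i; rw [← hμ00] at this; simpa using this
          have h2 := hy0B i
          simp only [Pi.add_apply, Pi.smul_apply, smul_eq_mul]
          nlinarith
        · intro j
          simp only [Pi.add_apply, Pi.smul_apply, Pi.zero_apply, smul_eq_mul]
          exact add_nonneg (hy0pos j) (mul_nonneg hlampos (hzpos j))
      have hnorm := hR _ hymem
      have h3 : ‖lam • z‖ ≤ ‖y0 + lam • z‖ + ‖y0‖ := by
        have h4 := norm_sub_le (y0 + lam • z) y0
        rwa [add_sub_cancel_left] at h4
      rw [norm_smul] at h3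
      simp only [Real.norm_eq_abs, abs_of_nonneg hlampos] at h3
      have h5 : lam * ‖z‖ ≤ R + ‖y0‖ := by linarith
      rw [hlam, div_mul_cancel₀ _ (ne_of_gt hznorm)] at h5
      linarith
    · -- μ0 > 0 : scale to contradiction
      have hy : Bm.mulVec (μ0⁻¹ • z) ≤ bv := by
        intro i
        rw [Matrix.mulVec_smul]
        simp only [Pi.smul_apply, smul_eq_mul]
        rw [inv_mul_le_iff₀ hμ0gt]
        have := hrow i; linarith [this]
      have hy' : 0 ≤ μ0⁻¹ • z := by
        intro j
        simp only [Pi.smul_apply, Pi.zero_apply, smul_eq_mul]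
        exact mul_nonneg (inv_nonneg.mpr hμ0pos) (hzpos j)
      have hcy := hub _ hy hy'
      rw [dotProduct_smul, smul_eq_mul, inv_mul_le_iff₀ hμ0gt] at hcy
      nlinarith
  -- extract v from the cone membership
  obtain ⟨μ, hμ, hpsum⟩ := hmem
  have happ : ∀ jj : Fin k ⊕ Unit,
      (∑ i, μ i • G i) jj = ∑ i, μ i * (G i jj) := by
    intro jj
    have h1 := map_sum (EuclideanSpace.projₗ jj : E →ₗ[ℝ] ℝ)
      (fun i => μ i • G i) Finset.univ
    calc (∑ i, μ i • G i) jj = (EuclideanSpace.projₗ jj : E →ₗ[ℝ] ℝ) (∑ i, μ i • G i) := rfl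
      _ = ∑ i, (EuclideanSpace.projₗ jj : E →ₗ[ℝ] ℝ) (μ i • G i) := h1
      _ = ∑ i, μ i * G i jj := Finset.sum_congr rfl fun i _ => by
            rw [_root_.map_smul]; rfl
  refine ⟨fun i => μ (Sum.inl i), fun i => hμ _, ?_, ?_⟩
  · intro j
    have h1 := congrArg (fun x : E => x (Sum.inl j)) hpsum
    simp only [happ] at h1
    rw [Fintype.sum_sum_type, Fintype.sum_sum_type] at h1
    have h2 : p (Sum.inl j) = c j := by simp [hp]
    rw [h2] at h1
    simp only [hG, PiLp.toLp_apply, Sum.elim_inl, Sum.elim_inr] at h1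
    have h3 : ∑ j₀ : Fin k, μ (Sum.inr (Sum.inl j₀)) *
        (if (j : Fin k) = j₀ then (-1:ℝ) else 0) = -μ (Sum.inr (Sum.inl j)) := by
      rw [Finset.sum_eq_single j]
      · simp
      · intro b _ hb; simp [Ne.symm hb]
      · intro hb; exact absurd (Finset.mem_univ j) hb
    rw [h3] at h1
    simp only [Finset.univ_unique, Finset.sum_singleton, mul_zero, add_zero] at h1
    have h4 : Bmᵀ.mulVec (fun i => μ (Sum.inl i)) j
        = ∑ i : Fin l, μ (Sum.inl i) * Bm i j := by
      simp [Matrix.mulVec, dotProduct, Matrix.transpose_apply, mul_comm]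
    rw [h4]
    have := hμ (Sum.inr (Sum.inl j))
    linarith [h1]
  · have h1 := congrArg (fun x : E => x (Sum.inr ())) hpsum
    simp only [happ] at h1
    rw [Fintype.sum_sum_type, Fintype.sum_sum_type] at h1
    have h2 : p (Sum.inr ()) = t := by simp [hp]
    rw [h2] at h1
    simp only [hG, PiLp.toLp_apply, Sum.elim_inl, Sum.elim_inr, mul_zero, mul_one,
      Finset.sum_const_zero, add_zero, zero_add, Finset.univ_unique,
      Finset.sum_singleton] at h1
    have h4 : bv ⬝ᵥ (fun i => μ (Sum.inl i)) = ∑ i : Fin l, μ (Sum.inl i) * bv i := by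
      simp [dotProduct, mul_comm]
    rw [h4]
    have := hμ (Sum.inr (Sum.inr ()))
    linarith [h1]


/-- Duality principle for the parametric linear systems (Theorem 4 of the
paper). -/
theorem stmt_11
    (n m q l : ℕ) (hn : 0 < n) (hm : 0 < m) (hq : 0 < q) (hl : 0 < l)
    (C : Matrix (Fin n) (Fin m) ℝ) (A : Matrix (Fin q) (Fin n) ℝ)
    (B : Matrix (Fin l) (Fin m) ℝ)
    (a : Fin q → ℝ) (b : Fin l → ℝ) (g : Fin n → ℝ) (e : Fin m → ℝ)
    (X : Set (Fin n → ℝ)) (Y : Set (Fin m → ℝ))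
    (hX : X = {x | A.mulVec x ≤ a ∧ 0 ≤ x})
    (hY : Y = {y | B.mulVec y ≤ b ∧ 0 ≤ y})
    (hXne : X.Nonempty) (hYne : Y.Nonempty)
    (hXbd : Bornology.IsBounded X) (hYbd : Bornology.IsBounded Y)
    (h : ℝ) :
    (∀ y : Fin m → ℝ, B.mulVec y ≤ b → 0 ≤ y →
      ∃ u : Fin q → ℝ,
        -(Aᵀ.mulVec u) ≤ C.mulVec y + g ∧ a ⬝ᵥ u ≤ e ⬝ᵥ y - h ∧ 0 ≤ u) ↔
    (∀ x : Fin n → ℝ, A.mulVec x ≤ a → 0 ≤ x →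
      ∃ v : Fin l → ℝ,
        -(Bᵀ.mulVec v) ≤ Cᵀ.mulVec x + e ∧ b ⬝ᵥ v ≤ g ⬝ᵥ x - h ∧ 0 ≤ v) := by
  rw [hX] at hXne hXbd
  rw [hY] at hYne hYbd
  constructor
  · intro H1 x hxA hxpos
    have hub : ∀ y : Fin m → ℝ, B.mulVec y ≤ b → 0 ≤ y →
        (-(Cᵀ.mulVec x + e)) ⬝ᵥ y ≤ g ⬝ᵥ x - h := by
      intro y hyB hypos
      obtain ⟨u, hu1, hu2, hu3⟩ := H1 y hyB hypos
      have f2 : (A.mulVec x) ⬝ᵥ u ≤ a ⬝ᵥ u := dot_mono_right hu3 hxA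
      have f3 : x ⬝ᵥ (-(Aᵀ.mulVec u)) ≤ x ⬝ᵥ (C.mulVec y + g) := dot_mono_left hxpos hu1
      have e1 : x ⬝ᵥ (-(Aᵀ.mulVec u)) = -((A.mulVec x) ⬝ᵥ u) := by
        rw [dotProduct_neg, Matrix.dotProduct_mulVec, Matrix.vecMul_transpose]
      have e2 : x ⬝ᵥ (C.mulVec y + g) = x ⬝ᵥ (C.mulVec y) + x ⬝ᵥ g := dotProduct_add x _ _
      have e3 : (-(Cᵀ.mulVec x + e)) ⬝ᵥ y = -((Cᵀ.mulVec x) ⬝ᵥ y) - e ⬝ᵥ y := by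
        rw [neg_dotProduct, add_dotProduct]; ring
      have e4 : (Cᵀ.mulVec x) ⬝ᵥ y = x ⬝ᵥ (C.mulVec y) := by
        rw [Matrix.mulVec_transpose, ← Matrix.dotProduct_mulVec]
      have e5 : g ⬝ᵥ x = x ⬝ᵥ g := dotProduct_comm g x
      rw [e3, e4, e5]
      rw [e1] at f3
      rw [e2] at f3
      linarith
    obtain ⟨v, hv0, hvc, hvb⟩ := key_farkas m l B b (-(Cᵀ.mulVec x + e)) (g ⬝ᵥ x - h)
      hYne hYbd hub
    refine ⟨v, ?_, hvb, hv0⟩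
    intro j
    have := hvc j
    simp only [Pi.neg_apply, Pi.add_apply] at this ⊢
    linarith
  · intro H2 y hyB hypos
    have hub : ∀ x : Fin n → ℝ, A.mulVec x ≤ a → 0 ≤ x →
        (-(C.mulVec y + g)) ⬝ᵥ x ≤ e ⬝ᵥ y - h := by
      intro x hxA hxpos
      obtain ⟨v, hv1, hv2, hv3⟩ := H2 x hxA hxpos
      have f2 : (B.mulVec y) ⬝ᵥ v ≤ b ⬝ᵥ v := dot_mono_right hv3 hyB
      have f3 : y ⬝ᵥ (-(Bᵀ.mulVec v)) ≤ y ⬝ᵥ (Cᵀ.mulVec x + e) := dot_mono_left hypos hv1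
      have e1 : y ⬝ᵥ (-(Bᵀ.mulVec v)) = -((B.mulVec y) ⬝ᵥ v) := by
        rw [dotProduct_neg, Matrix.dotProduct_mulVec, Matrix.vecMul_transpose]
      have e2 : y ⬝ᵥ (Cᵀ.mulVec x + e) = y ⬝ᵥ (Cᵀ.mulVec x) + y ⬝ᵥ e := dotProduct_add y _ _
      have e3 : (-(C.mulVec y + g)) ⬝ᵥ x = -((C.mulVec y) ⬝ᵥ x) - g ⬝ᵥ x := by
        rw [neg_dotProduct, add_dotProduct]; ring
      have e4 : y ⬝ᵥ (Cᵀ.mulVec x) = (C.mulVec y) ⬝ᵥ x := by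
        rw [Matrix.mulVec_transpose, dotProduct_comm y, ← Matrix.dotProduct_mulVec, dotProduct_comm]
      have e5 : e ⬝ᵥ y = y ⬝ᵥ e := dotProduct_comm e y
      rw [e3, e5]
      rw [e1] at f3
      rw [e2, e4] at f3
      linarith
    obtain ⟨u, hu0, huc, hua⟩ := key_farkas n q A a (-(C.mulVec y + g)) (e ⬝ᵥ y - h)
      hXne hXbd hub
    refine ⟨u, ?_, hua, hu0⟩
    intro j
    have := huc j
    simp only [Pi.neg_apply, Pi.add_apply] at this ⊢
    linarith
end

section
/- Assume X = {x ∈ ℝ^n : A x ≤ a, x ≥ 0} is nonempty and bounded and the system D y ≤ d is consistent, and let h ∈ ℝ. Then the system {−Aᵀu ≤ C y + g, a·u ≤ e·y − h, u ≥ 0} has a solution u ∈ ℝ^q for every y ∈ ℝ^m satisfying D y ≤ d, if and only if the system {−Dᵀv = Cᵀx + e, d·v ≤ g·x − h, v ≥ 0} has a solution v ∈ ℝ^p for every x ∈ ℝ^n satisfying A x ≤ a, x ≥ 0. -/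
open Matrix Finset
open scoped InnerProductSpace



lemma cone_carath {ι : Type*} [Fintype ι] {E : Type*} [AddCommGroup E] [Module ℝ E]
    (v : ι → E) :
    ∀ (s : Finset ι) (c : ι → ℝ), 0 ≤ c → (∀ i ∉ s, c i = 0) →
      ∃ (t : Finset ι) (c' : ι → ℝ), 0 ≤ c' ∧ (∀ i ∉ t, c' i = 0) ∧
        (∑ i, c' i • v i = ∑ i, c i • v i) ∧
        LinearIndependent ℝ (fun i : t => v i) := by
  classical
  intro s
  induction s using Finset.strongInduction with
  | _ s ih =>
  intro c hc hsupp
  by_cases hind : LinearIndependent ℝ (fun i : s => v i)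
  · exact ⟨s, c, hc, hsupp, rfl, hind⟩
  obtain ⟨g, hgsum, i₁, hgi₁⟩ := Fintype.not_linearIndependent_iff.mp hind
  -- extend g to ι
  set μ : ι → ℝ := fun i => if h : i ∈ s then g ⟨i, h⟩ else 0 with hμ
  have hμ0 : ∀ i ∉ s, μ i = 0 := fun i hi => dif_neg hi
  have hμsum : ∑ i, μ i • v i = 0 := by
    rw [← Finset.sum_subset (Finset.subset_univ s)
      (fun i _ hi => by rw [hμ0 i hi, zero_smul])]
    rw [← Finset.sum_attach s (fun i => μ i • v i)]
    rw [← hgsum]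
    refine Finset.sum_congr rfl fun i _ => ?_
    simp [hμ]
  have hμne : μ (↑i₁) ≠ 0 := by simpa [hμ] using hgi₁
  -- WLOG positive part
  obtain ⟨μ', hμ'0, hμ'sum, i₂, hi₂s, hi₂pos⟩ :
      ∃ μ' : ι → ℝ, (∀ i ∉ s, μ' i = 0) ∧ (∑ i, μ' i • v i = 0) ∧
        ∃ i₂, i₂ ∈ s ∧ 0 < μ' i₂ := by
    by_cases hpos : ∃ i ∈ s, 0 < μ i
    · obtain ⟨i₂, h1, h2⟩ := hpos
      exact ⟨μ, hμ0, hμsum, i₂, h1, h2⟩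
    · push_neg at hpos
      refine ⟨-μ, fun i hi => by simp [hμ0 i hi], by
        simp only [Pi.neg_apply, neg_smul, Finset.sum_neg_distrib, hμsum, neg_zero], ↑i₁, i₁.2, ?_⟩
      have := hpos ↑i₁ i₁.2
      simp only [Pi.neg_apply]
      cases lt_or_eq_of_le this with
      | inl h => linarith
      | inr h => exact absurd h hμne
  set T := s.filter (fun i => 0 < μ' i) with hT
  have hTne : T.Nonempty := ⟨i₂, Finset.mem_filter.mpr ⟨hi₂s, hi₂pos⟩⟩
  obtain ⟨i₀, hi₀T, hi₀min⟩ := Finset.exists_min_image T (fun i => c i / μ' i) hTne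
  have hi₀s : i₀ ∈ s := (Finset.mem_filter.mp hi₀T).1
  have hi₀pos : 0 < μ' i₀ := (Finset.mem_filter.mp hi₀T).2
  set r := c i₀ / μ' i₀ with hr
  have hr0 : 0 ≤ r := div_nonneg (hc i₀) hi₀pos.le
  set c'' : ι → ℝ := fun i => c i - r * μ' i with hc''
  have hc''0 : 0 ≤ c'' := by
    intro i
    simp only [hc'', Pi.zero_apply]
    by_cases hiT : i ∈ T
    · have hpos : 0 < μ' i := (Finset.mem_filter.mp hiT).2
      have h2 := hi₀min i hiT
      rw [le_div_iff₀ hpos] at h2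
      linarith
    · by_cases his : i ∈ s
      · have : ¬ 0 < μ' i := fun h => hiT (Finset.mem_filter.mpr ⟨his, h⟩)
        push_neg at this
        have hmn : r * μ' i ≤ 0 := mul_nonpos_of_nonneg_of_nonpos hr0 this
        have hci : (0:ℝ) ≤ c i := hc i
        linarith
      · have hci : (0:ℝ) ≤ c i := hc i
        rw [hμ'0 i his]
        simpa using hci
  have hc''i₀ : c'' i₀ = 0 := by
    simp only [hc'', hr]
    field_simp
    ring
  have hc''supp : ∀ i ∉ s.erase i₀, c'' i = 0 := by
    intro i hi
    by_cases his : i ∈ s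
    · have : i = i₀ := by
        by_contra hne
        exact hi (Finset.mem_erase.mpr ⟨hne, his⟩)
      rw [this]; exact hc''i₀
    · simp only [hc'', hsupp i his, hμ'0 i his, mul_zero, sub_zero]
  have hc''sum : ∑ i, c'' i • v i = ∑ i, c i • v i := by
    simp only [hc'', sub_smul, Finset.sum_sub_distrib, mul_smul, ← Finset.smul_sum,
      hμ'sum, smul_zero, sub_zero]
  obtain ⟨t, c', h1, h2, h3, h4⟩ := ih (s.erase i₀) (Finset.erase_ssubset hi₀s) c'' hc''0 hc''supp
  exact ⟨t, c', h1, h2, h3.trans hc''sum, h4⟩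

lemma sum_coe_ext {ι : Type*} [Fintype ι] {E : Type*} [AddCommGroup E] [Module ℝ E]
    (t : Finset ι) (c : ι → ℝ) (v : ι → E) (hsupp : ∀ i ∉ t, c i = 0) :
    ∑ i : t, c (i : ι) • v (i : ι) = ∑ i, c i • v i := by
  rw [Finset.sum_coe_sort t (fun i => c i • v i)]
  exact Finset.sum_subset (Finset.subset_univ t)
    (fun i _ hi => by rw [hsupp i hi, zero_smul])

lemma cone_isClosed_s12 {ι : Type*} [Fintype ι] {κ : Type*} [Fintype κ]
    (v : ι → EuclideanSpace ℝ κ) :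
    IsClosed {b : EuclideanSpace ℝ κ | ∃ c : ι → ℝ, 0 ≤ c ∧ ∑ i, c i • v i = b} := by
  classical
  have key : {b : EuclideanSpace ℝ κ | ∃ c : ι → ℝ, 0 ≤ c ∧ ∑ i, c i • v i = b} =
      ⋃ t : Finset ι, (if LinearIndependent ℝ (fun i : t => v i) then
        (fun c : t → ℝ => ∑ i : t, c i • v (i : ι)) '' {c | 0 ≤ c} else ∅) := by
    ext b
    simp only [Set.mem_setOf_eq, Set.mem_iUnion]
    constructor
    · rintro ⟨c, hc, hsum⟩
      obtain ⟨t, c', h0, hsupp, hs, hli⟩ := cone_carath v Finset.univ c hc (by simp)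
      refine ⟨t, ?_⟩
      rw [if_pos hli]
      refine ⟨fun i => c' i, fun i => h0 _, ?_⟩
      show (∑ i : t, c' (i : ι) • v (i : ι)) = b
      rw [sum_coe_ext t c' v hsupp, hs, hsum]
    · rintro ⟨t, hb⟩
      by_cases hli : LinearIndependent ℝ (fun i : t => v i)
      · rw [if_pos hli] at hb
        obtain ⟨c, hc, hsum⟩ := hb
        set cb : ι → ℝ := fun i => if h : i ∈ t then c ⟨i, h⟩ else 0 with hcb
        refine ⟨cb, ?_, ?_⟩
        · intro i; by_cases h : i ∈ t <;> simp only [hcb, h, dif_pos, dif_neg, not_false_iff]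
          · exact hc _
          · simp [h]
        · rw [← sum_coe_ext t cb v (fun i hi => dif_neg hi), ← hsum]
          refine Finset.sum_congr rfl fun i _ => ?_
          simp only [hcb, dif_pos i.2]
      · rw [if_neg hli] at hb; exact absurd hb (Set.notMem_empty b)
  rw [key]
  refine isClosed_iUnion_of_finite fun t => ?_
  by_cases hli : LinearIndependent ℝ (fun i : t => v i)
  · rw [if_pos hli]
    let L : (t → ℝ) →ₗ[ℝ] EuclideanSpace ℝ κ :=
      { toFun := fun c => ∑ i : t, c i • v (i : ι)
        map_add' := fun a b => by simp [add_smul, Finset.sum_add_distrib]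
        map_smul' := fun r a => by simp [mul_smul, Finset.smul_sum] }
    have hinj : Function.Injective L := by
      intro a b hab
      have h0 : L (a - b) = 0 := by rw [map_sub, hab, sub_self]
      have hz := Fintype.linearIndependent_iff.mp hli (a - b) h0
      funext i
      simpa [sub_eq_zero] using hz i
    have hce := LinearMap.isClosedEmbedding_of_injective (f := L)
      (LinearMap.ker_eq_bot.mpr hinj)
    have hcl : IsClosed {c : t → ℝ | 0 ≤ c} := by
      have : {c : t → ℝ | 0 ≤ c} = ⋂ i, (fun c : t → ℝ => c i) ⁻¹' Set.Ici 0 := by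
        ext c; simp [Pi.le_def, Set.mem_iInter]
      rw [this]
      exact isClosed_iInter fun i => isClosed_Ici.preimage (continuous_apply i)
    exact hce.isClosedMap _ hcl
  · rw [if_neg hli]; exact isClosed_empty

theorem farkas_s12 {ι κ : Type*} [Fintype ι] [Fintype κ] (v : ι → (κ → ℝ)) (b : κ → ℝ)
    (hb : ∀ x : κ → ℝ, (∀ i, v i ⬝ᵥ x ≤ 0) → b ⬝ᵥ x ≤ 0) :
    ∃ c : ι → ℝ, 0 ≤ c ∧ ∑ i, c i • v i = b := by
  classical
  by_contra hcon
  set v' : ι → EuclideanSpace ℝ κ := fun i => WithLp.toLp 2 (v i) with hv'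
  set b' : EuclideanSpace ℝ κ := WithLp.toLp 2 b with hb'
  set K : ConvexCone ℝ (EuclideanSpace ℝ κ) :=
    { carrier := {x : EuclideanSpace ℝ κ | ∃ c : ι → ℝ, 0 ≤ c ∧ ∑ i, c i • v' i = x}
      smul_mem' := by
        rintro r hr x ⟨c, hc, hsum⟩
        refine ⟨fun i => r * c i, fun i => mul_nonneg hr.le (hc i), ?_⟩
        simp only [mul_smul, ← Finset.smul_sum, hsum]
      add_mem' := by
        rintro x ⟨c, hc, hsum⟩ y ⟨c₂, hc₂, hsum₂⟩
        refine ⟨fun i => c i + c₂ i, fun i => add_nonneg (hc i) (hc₂ i), ?_⟩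
        simp only [add_smul, Finset.sum_add_distrib, hsum, hsum₂] } with hK
  have hKmem : ∀ x, x ∈ K ↔ ∃ c : ι → ℝ, 0 ≤ c ∧ ∑ i, c i • v' i = x := fun x => Iff.rfl
  have hne : (K : Set (EuclideanSpace ℝ κ)).Nonempty :=
    ⟨0, ⟨0, le_refl 0, by simp⟩⟩
  have hclosed : IsClosed (K : Set (EuclideanSpace ℝ κ)) := cone_isClosed_s12 v'
  have hbK : b' ∉ K := by
    intro hmem
    obtain ⟨c, hc, hsum⟩ := hmem
    exact hcon ⟨c, hc, by simpa [hv', hb', WithLp.ofLp_sum] using congrArg WithLp.ofLp hsum⟩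
  obtain ⟨y, hy1, hy2⟩ :=
    ProperCone.hyperplane_separation' ({ toSubmodule := K.toPointedCone (show K.Pointed from ⟨0, le_refl 0, by simp⟩), isClosed' := hclosed } : ProperCone ℝ (EuclideanSpace ℝ κ)) hbK
  have hinner : ∀ z : EuclideanSpace ℝ κ, ⟪z, y⟫_ℝ = ∑ i, z i * y i := by
    intro z
    rw [PiLp.inner_apply]
    simp [RCLike.inner_apply]
    exact Finset.sum_congr rfl fun i _ => mul_comm _ _
  have hviK : ∀ i, v' i ∈ K := by
    intro i
    refine ⟨fun j => if j = i then 1 else 0, fun j => by positivity, ?_⟩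
    simp
  have hyx : ∀ i, v i ⬝ᵥ (fun j => -(y j)) ≤ 0 := by
    intro i
    have h0 := hy1 (v' i) (hviK i)
    rw [hinner] at h0
    simp only [dotProduct, mul_neg, ← Finset.sum_neg_distrib]
    simpa using neg_nonpos_of_nonneg h0
  have hfin := hb _ hyx
  rw [hinner] at hy2
  simp only [dotProduct, mul_neg, ← Finset.sum_neg_distrib] at hfin
  have h1 : 0 ≤ ∑ i, b i * y i := by simpa using hfin
  have h2 : ∑ i, b i * y i < 0 := hy2
  linarith

lemma dot_le_dot_right {k : Type*} [Fintype k] {u v w : k → ℝ} (h : u ≤ v) (hw : 0 ≤ w) :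
    u ⬝ᵥ w ≤ v ⬝ᵥ w :=
  Finset.sum_le_sum fun i _ => mul_le_mul_of_nonneg_right (h i) (hw i)

lemma dot_le_dot_left {k : Type*} [Fintype k] {u v w : k → ℝ} (h : u ≤ v) (hw : 0 ≤ w) :
    w ⬝ᵥ u ≤ w ⬝ᵥ v :=
  Finset.sum_le_sum fun i _ => mul_le_mul_of_nonneg_left (h i) (hw i)

lemma trans_dot {n m : Type*} [Fintype n] [Fintype m] (C : Matrix n m ℝ)
    (x : n → ℝ) (y : m → ℝ) : (Cᵀ.mulVec x) ⬝ᵥ y = (C.mulVec y) ⬝ᵥ x := by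
  rw [Matrix.mulVec_transpose, ← Matrix.dotProduct_mulVec, dotProduct_comm]

lemma aux_rhs (m p : ℕ) (D : Matrix (Fin p) (Fin m) ℝ) (d : Fin p → ℝ)
    (hDcons : ∃ y : Fin m → ℝ, D.mulVec y ≤ d)
    (cvec : Fin m → ℝ) (β : ℝ)
    (hmid : ∀ y : Fin m → ℝ, D.mulVec y ≤ d → β ≤ cvec ⬝ᵥ y) :
    ∃ v : Fin p → ℝ, -(Dᵀ.mulVec v) = cvec ∧ d ⬝ᵥ v ≤ -β ∧ 0 ≤ v := by
  classical
  set vgen : (Fin p ⊕ Unit) → (Fin m ⊕ Unit → ℝ) := fun j =>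
    Sum.elim (fun jj => Sum.elim (fun i => D jj i) (fun _ => d jj))
      (fun _ => Sum.elim 0 (fun _ => 1)) j with hvgen
  set bvec : Fin m ⊕ Unit → ℝ := Sum.elim (fun i => -(cvec i)) (fun _ => -β) with hbvec
  have hb : ∀ x' : Fin m ⊕ Unit → ℝ, (∀ i, vgen i ⬝ᵥ x' ≤ 0) → bvec ⬝ᵥ x' ≤ 0 := by
    intro x' hx'
    set y : Fin m → ℝ := fun i => x' (Sum.inl i) with hy
    set t : ℝ := x' (Sum.inr ()) with ht
    have hconl : ∀ j, (D.mulVec y) j + d j * t ≤ 0 := by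
      intro j
      have := hx' (Sum.inl j)
      simpa [hvgen, dotProduct, Fintype.sum_sum_type, Matrix.mulVec, hy, ht] using this
    have hcont : t ≤ 0 := by
      have := hx' (Sum.inr ())
      simpa [hvgen, dotProduct, Fintype.sum_sum_type, ht] using this
    have hgoal : bvec ⬝ᵥ x' = -(cvec ⬝ᵥ y) + -β * t := by
      simp [hbvec, dotProduct, Fintype.sum_sum_type, hy, ht, Finset.sum_neg_distrib]
    rw [hgoal]
    rcases lt_or_eq_of_le hcont with htlt | hteq
    · set s : ℝ := -t with hs
      have hspos : 0 < s := by simp [hs]; linarith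
      set y' : Fin m → ℝ := s⁻¹ • y with hy'
      have hyy : y = s • y' := by rw [hy', smul_inv_smul₀ hspos.ne']
      have hfeas : D.mulVec y' ≤ d := by
        intro j
        have h1 : (D.mulVec y) j ≤ d j * s := by have := hconl j; rw [hs]; linarith
        have h2 : (D.mulVec y') j = s⁻¹ * (D.mulVec y) j := by
          rw [hy', Matrix.mulVec_smul]; simp [smul_eq_mul]
        rw [h2]
        rw [inv_mul_le_iff₀ hspos]
        linarith [h1]
      have hge := hmid y' hfeas
      have hcy : cvec ⬝ᵥ y = s * (cvec ⬝ᵥ y') := by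
        rw [hyy, dotProduct_smul]; simp [smul_eq_mul]
      have hmul : s * β ≤ s * (cvec ⬝ᵥ y') := mul_le_mul_of_nonneg_left hge hspos.le
      have hbt : -β * t = s * β := by rw [hs]; ring
      linarith
    · -- t = 0
      obtain ⟨y₀, hy₀⟩ := hDcons
      have hDy : D.mulVec y ≤ 0 := by
        intro j; have := hconl j; rw [hteq] at this; simpa using this
      have hcy : 0 ≤ cvec ⬝ᵥ y := by
        by_contra hneg
        push_neg at hneg
        set s : ℝ := (cvec ⬝ᵥ y₀ - β + 1) / (-(cvec ⬝ᵥ y)) with hsdef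
        have hnum : 0 < cvec ⬝ᵥ y₀ - β + 1 := by linarith [hmid y₀ hy₀]
        have hspos : 0 < s := div_pos hnum (by linarith)
        have hfeas : D.mulVec (y₀ + s • y) ≤ d := by
          intro j
          rw [Matrix.mulVec_add, Matrix.mulVec_smul]
          have h1 : (D.mulVec y) j ≤ 0 := hDy j
          have h2 : (D.mulVec y₀) j ≤ d j := hy₀ j
          have : s * (D.mulVec y) j ≤ 0 := mul_nonpos_of_nonneg_of_nonpos hspos.le h1
          simpa [smul_eq_mul] using by linarith
        have hval := hmid _ hfeas
        rw [dotProduct_add, dotProduct_smul, smul_eq_mul] at hval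
        have hyne : cvec ⬝ᵥ y ≠ 0 := ne_of_lt hneg
        have hsmul : s * (cvec ⬝ᵥ y) = -(cvec ⬝ᵥ y₀ - β + 1) := by
          rw [hsdef, div_mul_eq_mul_div, mul_div_assoc, div_neg, div_self hyne]
          ring
        rw [hsmul] at hval
        linarith
      rw [hteq]
      linarith
  obtain ⟨c', hc'0, hc'sum⟩ := farkas_s12 vgen bvec hb
  set vv : Fin p → ℝ := fun j => c' (Sum.inl j) with hvv
  have hcomp := fun z => congrFun hc'sum z
  have hl : ∀ i, ∑ j, vv j * D j i = -(cvec i) := by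
    intro i
    have := hcomp (Sum.inl i)
    simpa [Finset.sum_apply, hvgen, hbvec, Fintype.sum_sum_type, hvv] using this
  have hr : ∑ j, vv j * d j + c' (Sum.inr ()) = -β := by
    have := hcomp (Sum.inr ())
    simpa [Finset.sum_apply, hvgen, hbvec, Fintype.sum_sum_type, hvv] using this
  refine ⟨vv, ?_, ?_, fun j => hc'0 (Sum.inl j)⟩
  · funext i
    have := hl i
    simp only [Pi.neg_apply, Matrix.mulVec, dotProduct, Matrix.transpose_apply]
    rw [show (∑ j, D j i * vv j) = ∑ j, vv j * D j i from
      Finset.sum_congr rfl fun j _ => mul_comm _ _]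
    rw [this]; ring
  · have hs0 : 0 ≤ c' (Sum.inr ()) := hc'0 _
    have : d ⬝ᵥ vv = ∑ j, vv j * d j := Finset.sum_congr rfl fun j _ => mul_comm _ _
    rw [this]
    linarith

lemma aux_lhs (n q : ℕ) (A : Matrix (Fin q) (Fin n) ℝ) (a : Fin q → ℝ)
    (hrec : ∀ z : Fin n → ℝ, 0 ≤ z → A.mulVec z ≤ 0 → z = 0)
    (cvec : Fin n → ℝ) (α : ℝ)
    (hmid : ∀ x : Fin n → ℝ, A.mulVec x ≤ a → 0 ≤ x → -α ≤ cvec ⬝ᵥ x) :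
    ∃ u : Fin q → ℝ, -(Aᵀ.mulVec u) ≤ cvec ∧ a ⬝ᵥ u ≤ α ∧ 0 ≤ u := by
  classical
  set vgen : (Fin q ⊕ (Fin n ⊕ Unit)) → (Fin n ⊕ Unit → ℝ) := fun j =>
    Sum.elim (fun jj => Sum.elim (fun i => A jj i) (fun _ => a jj))
      (Sum.elim (fun ii => Sum.elim (fun i' => if i' = ii then (-1:ℝ) else 0) 0)
        (fun _ => Sum.elim 0 (fun _ => 1))) j with hvgen
  set bvec : Fin n ⊕ Unit → ℝ := Sum.elim (fun i => -(cvec i)) (fun _ => α) with hbvec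
  have hb : ∀ x' : Fin n ⊕ Unit → ℝ, (∀ i, vgen i ⬝ᵥ x' ≤ 0) → bvec ⬝ᵥ x' ≤ 0 := by
    intro x' hx'
    set x : Fin n → ℝ := fun i => x' (Sum.inl i) with hx
    set t : ℝ := x' (Sum.inr ()) with ht
    have hconl : ∀ j, (A.mulVec x) j + a j * t ≤ 0 := by
      intro j
      have := hx' (Sum.inl j)
      simpa [hvgen, dotProduct, Fintype.sum_sum_type, Matrix.mulVec, hx, ht] using this
    have hxpos : 0 ≤ x := by
      intro i
      have := hx' (Sum.inr (Sum.inl i))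
      simp only [hvgen, Sum.elim_inl, Sum.elim_inr, dotProduct,
        Fintype.sum_sum_type] at this
      simp only [ite_mul, neg_one_mul, zero_mul, Finset.sum_ite_eq',
        Finset.mem_univ, if_true, Pi.zero_apply] at this
      have hxi : x i = x' (Sum.inl i) := rfl
      show (0:ℝ) ≤ x i
      rw [hxi]
      simp only [Finset.sum_const_zero, add_zero] at this
      linarith
    have hcont : t ≤ 0 := by
      have := hx' (Sum.inr (Sum.inr ()))
      simpa [hvgen, dotProduct, Fintype.sum_sum_type, ht] using this
    have hgoal : bvec ⬝ᵥ x' = -(cvec ⬝ᵥ x) + α * t := by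
      simp [hbvec, dotProduct, Fintype.sum_sum_type, hx, ht, Finset.sum_neg_distrib]
    rw [hgoal]
    rcases lt_or_eq_of_le hcont with htlt | hteq
    · set s : ℝ := -t with hs
      have hspos : 0 < s := by simp [hs]; linarith
      set x₁ : Fin n → ℝ := s⁻¹ • x with hx₁
      have hxx : x = s • x₁ := by rw [hx₁, smul_inv_smul₀ hspos.ne']
      have hfeas : A.mulVec x₁ ≤ a := by
        intro j
        have h1 : (A.mulVec x) j ≤ a j * s := by have := hconl j; rw [hs]; linarith
        have h2 : (A.mulVec x₁) j = s⁻¹ * (A.mulVec x) j := by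
          rw [hx₁, Matrix.mulVec_smul]; simp [smul_eq_mul]
        rw [h2, inv_mul_le_iff₀ hspos]
        linarith
      have hx₁pos : 0 ≤ x₁ := by
        intro i
        have : (0:ℝ) ≤ x i := hxpos i
        have : x₁ i = s⁻¹ * x i := by rw [hx₁]; simp [smul_eq_mul]
        rw [this]
        positivity
      have hge := hmid x₁ hfeas hx₁pos
      have hcx : cvec ⬝ᵥ x = s * (cvec ⬝ᵥ x₁) := by
        rw [hxx, dotProduct_smul]; simp [smul_eq_mul]
      have hmul : s * (-α) ≤ s * (cvec ⬝ᵥ x₁) := mul_le_mul_of_nonneg_left hge hspos.le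
      have hbt : α * t = s * (-α) := by rw [hs]; ring
      linarith
    · have hA0 : A.mulVec x ≤ 0 := by
        intro j; have := hconl j; rw [hteq] at this; simpa using this
      have hx0 : x = 0 := hrec x hxpos hA0
      rw [hx0, hteq]
      simp
  obtain ⟨c', hc'0, hc'sum⟩ := farkas_s12 vgen bvec hb
  set u : Fin q → ℝ := fun j => c' (Sum.inl j) with hu
  have hcomp := fun z => congrFun hc'sum z
  have hl : ∀ i, ∑ j, u j * A j i - c' (Sum.inr (Sum.inl i)) = -(cvec i) := by
    intro i
    have h0 := hcomp (Sum.inl i)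
    simp only [Finset.sum_apply, hvgen, hbvec, Fintype.sum_sum_type, Pi.smul_apply,
      smul_eq_mul, Sum.elim_inl, Sum.elim_inr] at h0
    simp only [mul_ite, mul_neg_one, mul_zero, Finset.sum_ite_eq, Finset.mem_univ,
      if_true, Finset.sum_const_zero, add_zero] at h0
    simp only [Fintype.sum_unique, Pi.zero_apply, mul_zero, add_zero] at h0
    have hdef : ∑ j, u j * A j i = ∑ x, c' (Sum.inl x) * A x i := rfl
    rw [hdef]
    linarith
  have hr : ∑ j, u j * a j + c' (Sum.inr (Sum.inr ())) = α := by
    have h0 := hcomp (Sum.inr ())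
    simp only [Finset.sum_apply, hvgen, hbvec, Fintype.sum_sum_type, Pi.smul_apply,
      smul_eq_mul, Sum.elim_inl, Sum.elim_inr, Pi.zero_apply, mul_zero, mul_one,
      Finset.sum_const_zero, add_zero, zero_add] at h0
    simp only [Fintype.sum_unique] at h0
    have hdef : ∑ j, u j * a j = ∑ x, c' (Sum.inl x) * a x := rfl
    rw [hdef]
    linarith
  refine ⟨u, ?_, ?_, fun j => hc'0 (Sum.inl j)⟩
  · intro i
    have h1 := hl i
    have h2 : (0:ℝ) ≤ c' (Sum.inr (Sum.inl i)) := hc'0 _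
    have h3 : (Aᵀ.mulVec u) i = ∑ j, u j * A j i := by
      simp only [Matrix.mulVec, dotProduct, Matrix.transpose_apply]
      exact Finset.sum_congr rfl fun j _ => mul_comm _ _
    simp only [Pi.neg_apply]
    rw [h3] at *
    linarith
  · have h4 : a ⬝ᵥ u = ∑ j, u j * a j := Finset.sum_congr rfl fun j _ => mul_comm _ _
    have h5 : (0:ℝ) ≤ c' (Sum.inr (Sum.inr ())) := hc'0 _
    rw [h4]
    linarith

/-- Duality principle for the parametric linear systems when `Y` is given by
an arbitrary consistent system `D y ≤ d` (Theorem 5 of the paper). -/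
theorem stmt_12
    (n m q p : ℕ) (hn : 0 < n) (hm : 0 < m) (hq : 0 < q) (hp : 0 < p)
    (C : Matrix (Fin n) (Fin m) ℝ) (A : Matrix (Fin q) (Fin n) ℝ)
    (D : Matrix (Fin p) (Fin m) ℝ)
    (a : Fin q → ℝ) (d : Fin p → ℝ) (g : Fin n → ℝ) (e : Fin m → ℝ)
    (X : Set (Fin n → ℝ))
    (hX : X = {x | A.mulVec x ≤ a ∧ 0 ≤ x})
    (hXne : X.Nonempty) (hXbd : Bornology.IsBounded X)
    (hDcons : ∃ y : Fin m → ℝ, D.mulVec y ≤ d)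
    (h : ℝ) :
    (∀ y : Fin m → ℝ, D.mulVec y ≤ d →
      ∃ u : Fin q → ℝ,
        -(Aᵀ.mulVec u) ≤ C.mulVec y + g ∧ a ⬝ᵥ u ≤ e ⬝ᵥ y - h ∧ 0 ≤ u) ↔
    (∀ x : Fin n → ℝ, A.mulVec x ≤ a → 0 ≤ x →
      ∃ v : Fin p → ℝ,
        -(Dᵀ.mulVec v) = Cᵀ.mulVec x + e ∧ d ⬝ᵥ v ≤ g ⬝ᵥ x - h ∧ 0 ≤ v) := by
  classical
  subst hX
  obtain ⟨x₀, hx₀a, hx₀0⟩ := hXne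
  -- recession cone of X is trivial
  have hrec : ∀ z : Fin n → ℝ, 0 ≤ z → A.mulVec z ≤ 0 → z = 0 := by
    intro z hz0 hAz
    by_contra hzne
    obtain ⟨R, hR⟩ := isBounded_iff_forall_norm_le.mp hXbd
    have hz : 0 < ‖z‖ := norm_pos_iff.mpr hzne
    set s : ℝ := (R + ‖x₀‖ + 1) / ‖z‖ with hsdef
    have hnum : 0 < R + ‖x₀‖ + 1 := by
      have h0 := hR x₀ ⟨hx₀a, hx₀0⟩
      have h1 := norm_nonneg x₀
      linarith
    have hs : 0 < s := div_pos hnum hz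
    have hmem : x₀ + s • z ∈ {x | A.mulVec x ≤ a ∧ 0 ≤ x} := by
      constructor
      · intro j
        rw [Matrix.mulVec_add, Matrix.mulVec_smul]
        have h1 : (A.mulVec z) j ≤ 0 := hAz j
        have h2 : (A.mulVec x₀) j ≤ a j := hx₀a j
        have h3 : s * (A.mulVec z) j ≤ 0 := mul_nonpos_of_nonneg_of_nonpos hs.le h1
        simp only [Pi.add_apply, Pi.smul_apply, smul_eq_mul]
        linarith
      · intro i
        have h1 : (0:ℝ) ≤ x₀ i := hx₀0 i
        have h2 : (0:ℝ) ≤ s * z i := mul_nonneg hs.le (hz0 i)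
        show (0:ℝ) ≤ (x₀ + s • z) i
        simp only [Pi.add_apply, Pi.smul_apply, smul_eq_mul]
        linarith
    have hnorm := hR _ hmem
    have h1 : ‖s • z‖ = s * ‖z‖ := by
      rw [norm_smul, Real.norm_of_nonneg hs.le]
    have h2 : ‖s • z‖ ≤ ‖x₀ + s • z‖ + ‖x₀‖ := by
      calc ‖s • z‖ = ‖(x₀ + s • z) - x₀‖ := by congr 1; abel
        _ ≤ ‖x₀ + s • z‖ + ‖x₀‖ := norm_sub_le _ _
    have hsz : s * ‖z‖ = R + ‖x₀‖ + 1 := div_mul_cancel₀ _ hz.ne'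
    linarith
  -- the intermediate statement
  set MID : Prop := ∀ x : Fin n → ℝ, ∀ y : Fin m → ℝ,
      A.mulVec x ≤ a → 0 ≤ x → D.mulVec y ≤ d →
      h ≤ (C.mulVec y) ⬝ᵥ x + g ⬝ᵥ x + e ⬝ᵥ y with hMID
  have key₁ : (∀ y : Fin m → ℝ, D.mulVec y ≤ d →
      ∃ u : Fin q → ℝ,
        -(Aᵀ.mulVec u) ≤ C.mulVec y + g ∧ a ⬝ᵥ u ≤ e ⬝ᵥ y - h ∧ 0 ≤ u) → MID := by
    intro hl
    intro x y hax hx0 hdy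
    obtain ⟨u, hu1, hu2, hu3⟩ := hl y hdy
    have e1 : (-(Aᵀ.mulVec u)) ⬝ᵥ x ≤ (C.mulVec y + g) ⬝ᵥ x := dot_le_dot_right hu1 hx0
    rw [neg_dotProduct, add_dotProduct] at e1
    have e2 : (Aᵀ.mulVec u) ⬝ᵥ x = u ⬝ᵥ (A.mulVec x) := by
      rw [Matrix.mulVec_transpose, ← Matrix.dotProduct_mulVec]
    have e3 : u ⬝ᵥ (A.mulVec x) ≤ u ⬝ᵥ a := dot_le_dot_left hax hu3
    have e4 : u ⬝ᵥ a = a ⬝ᵥ u := dotProduct_comm _ _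
    linarith
  have key₃ : (∀ x : Fin n → ℝ, A.mulVec x ≤ a → 0 ≤ x →
      ∃ v : Fin p → ℝ,
        -(Dᵀ.mulVec v) = Cᵀ.mulVec x + e ∧ d ⬝ᵥ v ≤ g ⬝ᵥ x - h ∧ 0 ≤ v) → MID := by
    intro hr
    intro x y hax hx0 hdy
    obtain ⟨v, hv1, hv2, hv3⟩ := hr x hax hx0
    have e1 : (Cᵀ.mulVec x + e) ⬝ᵥ y = -((Dᵀ.mulVec v) ⬝ᵥ y) := by
      rw [← hv1, neg_dotProduct]
    rw [add_dotProduct, trans_dot] at e1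
    have e2 : (Dᵀ.mulVec v) ⬝ᵥ y = v ⬝ᵥ (D.mulVec y) := by
      rw [Matrix.mulVec_transpose, ← Matrix.dotProduct_mulVec]
    have e3 : v ⬝ᵥ (D.mulVec y) ≤ v ⬝ᵥ d := dot_le_dot_left hdy hv3
    have e4 : v ⬝ᵥ d = d ⬝ᵥ v := dotProduct_comm _ _
    linarith
  have key₂ : MID → (∀ x : Fin n → ℝ, A.mulVec x ≤ a → 0 ≤ x →
      ∃ v : Fin p → ℝ,
        -(Dᵀ.mulVec v) = Cᵀ.mulVec x + e ∧ d ⬝ᵥ v ≤ g ⬝ᵥ x - h ∧ 0 ≤ v) := by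
    intro hmid x hax hx0
    obtain ⟨v, hv1, hv2, hv3⟩ := aux_rhs m p D d hDcons (Cᵀ.mulVec x + e) (h - g ⬝ᵥ x)
      (by
        intro y hdy
        have e1 := hmid x y hax hx0 hdy
        have e2 : (Cᵀ.mulVec x + e) ⬝ᵥ y = (C.mulVec y) ⬝ᵥ x + e ⬝ᵥ y := by
          rw [add_dotProduct, trans_dot]
        linarith)
    exact ⟨v, hv1, by linarith, hv3⟩
  have key₄ : MID → (∀ y : Fin m → ℝ, D.mulVec y ≤ d →
      ∃ u : Fin q → ℝ,
        -(Aᵀ.mulVec u) ≤ C.mulVec y + g ∧ a ⬝ᵥ u ≤ e ⬝ᵥ y - h ∧ 0 ≤ u) := by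
    intro hmid y hdy
    obtain ⟨u, hu1, hu2, hu3⟩ := aux_lhs n q A a hrec (C.mulVec y + g) (e ⬝ᵥ y - h)
      (by
        intro x hax hx0
        have e1 := hmid x y hax hx0 hdy
        have e2 : (C.mulVec y + g) ⬝ᵥ x = (C.mulVec y) ⬝ᵥ x + g ⬝ᵥ x := by
          rw [add_dotProduct]
        linarith)
    exact ⟨u, hu1, hu2, hu3⟩
  exact ⟨fun hl => key₂ (key₁ hl), fun hr => key₄ (key₃ hr)⟩
end

section
/- Suppose the system D y ≤ d is inconsistent (has no solution y ∈ ℝ^m). Then the inequality s·y ≤ s₀ is redundant for the inconsistent system D y ≤ d if and only if there exist v ∈ ℝ^p with v ≥ 0 and v₀ ≥ 0 such that Dᵀv = s, d·v + v₀ = s₀, and the set of rows {Dᵢ : vᵢ > 0} of D is linearly independent. Moreover, in that case the subsystem of D y ≤ d consisting of the inequalities with indices i such that vᵢ > 0 is consistent. -/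
open Matrix Finset

/-- Conic Carathéodory with a linear-cost tracking. -/
private lemma cara2 {E : Type*} [AddCommGroup E] [Module ℝ E] {ι : Type*} [Fintype ι]
    (w : ι → E) (δ : ι → ℝ)
    (H : ∀ c : ι → ℝ, 0 ≤ c → ∑ i, c i • w i = 0 → 0 ≤ ∑ i, c i * δ i) :
    ∀ (n : ℕ) (u : ι → ℝ), 0 ≤ u → ({i | u i ≠ 0}).ncard ≤ n →
    ∃ u' : ι → ℝ, 0 ≤ u' ∧ (∀ i, u' i ≠ 0 → u i ≠ 0) ∧
      (∑ i, u' i • w i = ∑ i, u i • w i) ∧ (∑ i, u' i * δ i ≤ ∑ i, u i * δ i) ∧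
      LinearIndependent ℝ (fun i : {i // u' i ≠ 0} => w i) := by
  intro n
  induction n with
  | zero =>
    intro u hu hcard
    have he : {i | u i ≠ 0} = ∅ := by
      have := Set.ncard_eq_zero (Set.toFinite {i | u i ≠ 0})
      exact this.mp (Nat.le_zero.mp hcard)
    have : IsEmpty {i // u i ≠ 0} := by
      constructor; rintro ⟨i, hi⟩
      exact Set.eq_empty_iff_forall_notMem.mp he i hi
    exact ⟨u, hu, fun _ h => h, rfl, le_refl _, linearIndependent_empty_type⟩
  | succ n ih =>
    intro u hu hcard
    classical
    by_cases hind : LinearIndependent ℝ (fun i : {i // u i ≠ 0} => w i)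
    · exact ⟨u, hu, fun _ h => h, rfl, le_refl _, hind⟩
    obtain ⟨g, hgsum, j, hgj⟩ := Fintype.not_linearIndependent_iff.mp hind
    -- extend g to ι
    set c₀ : ι → ℝ := fun i => if h : u i ≠ 0 then g ⟨i, h⟩ else 0 with hc₀
    have hsum_ext : ∀ c : ι → ℝ, (∀ i (h : u i ≠ 0), c i = g ⟨i, h⟩ → True) → True := fun _ _ => trivial
    have hcsum : ∀ (f : ι → ℝ), (∀ i, u i = 0 → f i = 0) →
        ∑ i, f i • w i = ∑ i : {i // u i ≠ 0}, f i • w i := by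
      intro f hf
      rw [← Finset.sum_subtype (Finset.univ.filter (fun i => u i ≠ 0))
        (by simp) (fun i => f i • w i)]
      symm
      apply Finset.sum_subset (Finset.subset_univ _)
      intro i _ hi
      simp only [Finset.mem_filter, Finset.mem_univ, true_and, not_not] at hi
      rw [hf i hi, zero_smul]
    have hcdel : ∀ (f : ι → ℝ), (∀ i, u i = 0 → f i = 0) →
        ∑ i, f i * δ i = ∑ i : {i // u i ≠ 0}, f i * δ i := by
      intro f hf
      rw [← Finset.sum_subtype (Finset.univ.filter (fun i => u i ≠ 0))
        (by simp) (fun i => f i * δ i)]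
      symm
      apply Finset.sum_subset (Finset.subset_univ _)
      intro i _ hi
      simp only [Finset.mem_filter, Finset.mem_univ, true_and, not_not] at hi
      rw [hf i hi, zero_mul]
    have hc₀supp : ∀ i, u i = 0 → c₀ i = 0 := by
      intro i hi; simp [hc₀, hi]
    have hc₀w : ∑ i, c₀ i • w i = 0 := by
      rw [hcsum c₀ hc₀supp]
      rw [← hgsum]
      apply Finset.sum_congr rfl
      rintro ⟨i, hi⟩ _
      simp [hc₀, hi]
    have hc₀ne : c₀ j.1 ≠ 0 := by simp [hc₀, j.2, hgj]
    -- main reduction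
    have key : ∀ c : ι → ℝ, (∀ i, u i = 0 → c i = 0) → (∑ i, c i • w i = 0) →
        0 ≤ ∑ i, c i * δ i → (∃ i, 0 < c i) →
        ∃ u' : ι → ℝ, 0 ≤ u' ∧ (∀ i, u' i ≠ 0 → u i ≠ 0) ∧
          (∑ i, u' i • w i = ∑ i, u i • w i) ∧ (∑ i, u' i * δ i ≤ ∑ i, u i * δ i) ∧
          LinearIndependent ℝ (fun i : {i // u' i ≠ 0} => w i) := by
      intro c hcsupp hcw hcd ⟨i₁, hi₁⟩
      have hu0 : ∀ i, (0:ℝ) ≤ u i := fun i => hu i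
      have hS : (Finset.univ.filter (fun i => 0 < c i)).Nonempty :=
        ⟨i₁, by simp [hi₁]⟩
      obtain ⟨i₀, hi₀S, hi₀min⟩ := Finset.exists_min_image _ (fun i => u i / c i) hS
      simp only [Finset.mem_filter, Finset.mem_univ, true_and] at hi₀S
      set t : ℝ := u i₀ / c i₀ with ht
      have hui₀ : 0 < u i₀ := by
        rcases lt_or_eq_of_le (hu0 i₀) with h | h
        · exact h
        · exact absurd (hcsupp i₀ h.symm) (ne_of_gt hi₀S)
      have htpos : 0 < t := div_pos hui₀ hi₀S
      set u' : ι → ℝ := fun i => u i - t * c i with hu'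
      have hu'nonneg : 0 ≤ u' := by
        intro i
        simp only [hu', Pi.zero_apply]
        rcases le_or_gt (c i) 0 with h | h
        · have h2 : t * c i ≤ 0 := mul_nonpos_of_nonneg_of_nonpos htpos.le h
          linarith [hu0 i]
        · have hmin := (div_le_div_iff₀ hi₀S h).mp (hi₀min i (by simp [h]))
          have h2 : t * c i ≤ u i := by
            rw [ht, div_mul_eq_mul_div, div_le_iff₀ hi₀S]
            linarith
          linarith
      have hu'supp : ∀ i, u i = 0 → u' i = 0 := by
        intro i hi
        simp [hu', hi, hcsupp i hi]
      have hu'i₀ : u' i₀ = 0 := by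
        simp only [hu', ht]
        field_simp
        simp
      have hssub : {i | u' i ≠ 0} ⊂ {i | u i ≠ 0} := by
        constructor
        · intro i hi
          intro h
          exact hi (hu'supp i h)
        · intro hsub
          exact (hsub (Set.mem_setOf.mpr (ne_of_gt hui₀))) hu'i₀
      have hcard' : ({i | u' i ≠ 0}).ncard ≤ n := by
        have := Set.ncard_lt_ncard hssub (Set.toFinite _)
        omega
      obtain ⟨u'', h1, h2, h3, h4, h5⟩ := ih u' hu'nonneg hcard'
      refine ⟨u'', h1, ?_, ?_, ?_, h5⟩
      · intro i hi
        intro h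
        exact h2 i hi (hu'supp i h)
      · rw [h3]
        have : ∑ i, u' i • w i = ∑ i, u i • w i - t • ∑ i, c i • w i := by
          rw [Finset.smul_sum, ← Finset.sum_sub_distrib]
          apply Finset.sum_congr rfl
          intro i _
          simp only [hu', sub_smul, mul_smul]
        rw [this, hcw, smul_zero, sub_zero]
      · have : ∑ i, u' i * δ i = ∑ i, u i * δ i - t * ∑ i, c i * δ i := by
          rw [Finset.mul_sum, ← Finset.sum_sub_distrib]
          apply Finset.sum_congr rfl
          intro i _
          simp [hu']; ring
        calc ∑ i, u'' i * δ i ≤ ∑ i, u' i * δ i := h4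
        _ = ∑ i, u i * δ i - t * ∑ i, c i * δ i := this
        _ ≤ ∑ i, u i * δ i := by nlinarith
    -- choose sign of c₀
    by_cases hd : 0 ≤ ∑ i, c₀ i * δ i
    · by_cases hpos : ∃ i, 0 < c₀ i
      · exact key c₀ hc₀supp hc₀w hd hpos
      · push_neg at hpos
        have hneg : 0 ≤ -c₀ := fun i => by simpa using hpos i
        have hw' : ∑ i, (-c₀) i • w i = 0 := by
          simp only [Pi.neg_apply, neg_smul, Finset.sum_neg_distrib, hc₀w, neg_zero]
        have := H (-c₀) hneg hw'
        have hd0 : ∑ i, (-c₀) i * δ i = 0 := by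
          have : ∑ i, (-c₀) i * δ i = -∑ i, c₀ i * δ i := by
            simp [Finset.sum_neg_distrib]
          linarith [this ▸ H (-c₀) hneg hw', hd]
        apply key (-c₀) (fun i hi => by simp [hc₀supp i hi]) hw' (le_of_eq hd0.symm)
        rcases lt_or_eq_of_le (hpos j.1) with h | h
        · exact ⟨j.1, by simpa using h⟩
        · exact absurd h hc₀ne
    · push_neg at hd
      have hw' : ∑ i, (-c₀) i • w i = 0 := by
        simp only [Pi.neg_apply, neg_smul, Finset.sum_neg_distrib, hc₀w, neg_zero]
      apply key (-c₀) (fun i hi => by simp [hc₀supp i hi]) hw'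
      · have : ∑ i, (-c₀) i * δ i = -∑ i, c₀ i * δ i := by
          simp [Finset.sum_neg_distrib]
        rw [this]; linarith
      · by_contra hpos
        push_neg at hpos
        have : ∀ i, 0 ≤ c₀ i := fun i => by
          have := hpos i; simp only [Pi.neg_apply] at this; linarith
        have := H c₀ this hc₀w
        linarith

/-- Solve `w i ⬝ᵥ y = b i` when the `w i` are linearly independent. -/
private lemma exists_dotProduct_eq {m : ℕ} {ι : Type*} [Fintype ι]
    (w : ι → (Fin m → ℝ)) (hw : LinearIndependent ℝ w) (b : ι → ℝ) :
    ∃ y : Fin m → ℝ, ∀ i, w i ⬝ᵥ y = b i := by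
  classical
  set G : Matrix ι ι ℝ := Matrix.of (fun i j => w i ⬝ᵥ w j) with hG
  have key : ∀ c : ι → ℝ, G *ᵥ c = (fun i => w i ⬝ᵥ (∑ j, c j • w j)) := by
    intro c
    funext i
    simp only [Matrix.mulVec, dotProduct, hG, Matrix.of_apply, Finset.sum_apply,
      Pi.smul_apply, smul_eq_mul, Finset.mul_sum, Finset.sum_mul]
    rw [Finset.sum_comm]
    apply Finset.sum_congr rfl
    intro j _
    apply Finset.sum_congr rfl
    intro k _
    ring
  have hdot : ∀ (c : ι → ℝ) (zz : Fin m → ℝ),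
      (∑ j, c j • w j) ⬝ᵥ zz = ∑ j, c j * (w j ⬝ᵥ zz) := by
    intro c zz
    simp only [dotProduct, Finset.sum_apply, Pi.smul_apply, smul_eq_mul,
      Finset.sum_mul, Finset.mul_sum]
    rw [Finset.sum_comm]
    apply Finset.sum_congr rfl
    intro j _
    apply Finset.sum_congr rfl
    intro k _
    ring
  have hinj : Function.Injective G.mulVecLin := by
    rw [← LinearMap.ker_eq_bot, LinearMap.ker_eq_bot']
    intro c hc
    have hc' : G *ᵥ c = 0 := hc
    have hz : (∑ j, c j • w j) ⬝ᵥ (∑ j, c j • w j) = 0 := by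
      rw [hdot c]
      have h1 : ∀ j ∈ Finset.univ, c j * (w j ⬝ᵥ (∑ k, c k • w k)) = c j * (G *ᵥ c) j := by
        intro j _
        rw [key c]
      rw [Finset.sum_congr rfl h1, hc']
      simp
    have hzero : ∑ j, c j • w j = 0 := dotProduct_self_eq_zero.mp hz
    funext i
    exact Fintype.linearIndependent_iff.mp hw c hzero i
  obtain ⟨c, hc⟩ := (LinearMap.injective_iff_surjective.mp hinj) b
  have hc2 : G *ᵥ c = b := hc
  refine ⟨∑ j, c j • w j, fun i => ?_⟩
  have h3 := congrFun (key c) i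
  rw [← h3, hc2]

private lemma sum_support_subtype {α : Type*} [Fintype α] {M : Type*} [AddCommMonoid M]
    (I : Finset α) (F : α → M) (hF : ∀ i, i ∉ I → F i = 0) :
    ∑ i : α, F i = ∑ i : ↥I, F i.1 := by
  rw [Finset.sum_coe_sort I F]
  exact (Finset.sum_subset I.subset_univ (fun x _ hx => hF x hx)).symm

private lemma orth_closed {σ : Type*} [Fintype σ] : IsClosed {x : σ → ℝ | 0 ≤ x} := by
  have : {x : σ → ℝ | 0 ≤ x} = Set.pi Set.univ (fun _ => Set.Ici (0:ℝ)) := by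
    ext x
    simp [Pi.le_def, Set.mem_pi]
  rw [this]
  exact isClosed_set_pi (fun i _ => isClosed_Ici)

/-- Farkas lemma for finitely generated cones in a finite-dimensional normed space. -/
private lemma farkas_cone {E : Type*} [NormedAddCommGroup E] [NormedSpace ℝ E]
    [FiniteDimensional ℝ E] {ι : Type*} [Fintype ι]
    (w : ι → E) (c : E)
    (h : ∀ f : E →L[ℝ] ℝ, (∀ i, f (w i) ≤ 0) → f c ≤ 0) :
    ∃ u : ι → ℝ, 0 ≤ u ∧ ∑ i, u i • w i = c := by
  classical
  set T : (ι → ℝ) →ₗ[ℝ] E :=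
    { toFun := fun x => ∑ i, x i • w i
      map_add' := by
        intro x y
        simp [add_smul, Finset.sum_add_distrib]
      map_smul' := by
        intro r x
        simp [mul_smul, Finset.smul_sum] } with hT
  set K : Set E := T '' {x | 0 ≤ x} with hK
  have hTapp : ∀ x : ι → ℝ, T x = ∑ i, x i • w i := fun _ => rfl
  by_contra hcon
  have hcK : c ∉ K := by
    intro ⟨x, hx, hxc⟩
    exact hcon ⟨x, hx, hxc⟩
  -- K is convex
  have hconv : Convex ℝ K := by
    apply Convex.linear_image _ T
    intro x hx y hy a b ha hb _
    intro i
    have := hx i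
    have := hy i
    simp only [Pi.add_apply, Pi.smul_apply, smul_eq_mul, Pi.zero_apply] at *
    nlinarith
  -- K is closed
  have hclosed : IsClosed K := by
    -- K is the finite union over independent index sets
    set 𝒮 : Set (Finset ι) := {S | LinearIndependent ℝ (fun i : ↥S => w i.1)} with h𝒮
    have hKU : K = ⋃ S ∈ 𝒮, (fun x : ↥S → ℝ => ∑ i : ↥S, x i • w i.1) '' {x | 0 ≤ x} := by
      ext z
      constructor
      · rintro ⟨x, hx, rfl⟩
        obtain ⟨u', hu'0, hu'supp, hu'sum, -, hu'ind⟩ :=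
          cara2 w (fun _ => (0:ℝ)) (fun c hc hcw => by simp)
            ({i | x i ≠ 0}).ncard x hx le_rfl
        set S : Finset ι := Finset.univ.filter (fun i => u' i ≠ 0) with hS
        have hmemS : ∀ i : ι, i ∈ S ↔ u' i ≠ 0 := by
          intro i; simp [hS]
        have hindS : LinearIndependent ℝ (fun i : ↥S => w i.1) := by
          have hg : Function.Injective
              (fun i : ↥S => (⟨i.1, (hmemS i.1).mp i.2⟩ : {i // u' i ≠ 0})) := by
            intro a b hab
            have : a.1 = b.1 := congrArg (Subtype.val : {i // u' i ≠ 0} → ι) hab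
            exact Subtype.ext this
          exact hu'ind.comp _ hg
        refine Set.mem_iUnion.mpr ⟨S, Set.mem_iUnion.mpr ⟨hindS, ?_⟩⟩
        refine ⟨fun i => u' i.1, fun i => hu'0 i.1, ?_⟩
        show (∑ i : ↥S, u' i.1 • w i.1) = T x
        rw [← sum_support_subtype S (fun i => u' i • w i)
          (fun i hi => by rw [not_iff_not.mpr (hmemS i), not_not] at hi; simp [hi]), hTapp]
        exact hu'sum
      · rintro hz
        obtain ⟨S, hS2⟩ := Set.mem_iUnion.mp hz
        obtain ⟨hSind, x, hx, rfl⟩ := Set.mem_iUnion.mp hS2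
        classical
        refine ⟨fun i => if h : i ∈ S then x ⟨i, h⟩ else 0, ?_, ?_⟩
        · intro i
          by_cases h : i ∈ S <;> simp [h]
          exact hx ⟨i, h⟩
        · show T _ = ∑ i : ↥S, x i • w i.1
          rw [hTapp]
          rw [sum_support_subtype S (fun i => (if h : i ∈ S then x ⟨i, h⟩ else 0) • w i)
            (fun i hi => by simp [hi])]
          apply Finset.sum_congr rfl
          rintro ⟨i, hi⟩ _
          simp [hi]
    rw [hKU]
    apply Set.Finite.isClosed_biUnion (Set.toFinite 𝒮)
    intro S hS
    have hSind : LinearIndependent ℝ (fun i : ↥S => w i.1) := hS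
    set TS : (↥S → ℝ) →ₗ[ℝ] E :=
      { toFun := fun x => ∑ i : ↥S, x i • w i.1
        map_add' := by
          intro x y
          simp [add_smul, Finset.sum_add_distrib]
        map_smul' := by
          intro r x
          simp [mul_smul, Finset.smul_sum] } with hTS
    have hker : LinearMap.ker TS = ⊥ := by
      rw [LinearMap.ker_eq_bot']
      intro x hx
      funext i
      exact Fintype.linearIndependent_iff.mp hSind x hx i
    exact (LinearMap.isClosedEmbedding_of_injective hker).isClosedMap _ orth_closed
  -- separate
  obtain ⟨f, u, hfa, hfc⟩ := geometric_hahn_banach_closed_point hconv hclosed hcK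
  have hu0 : 0 < u := by
    have h0K : (0 : E) ∈ K := ⟨0, by intro i; exact le_refl 0, map_zero T⟩
    have := hfa 0 h0K
    simpa using this
  have hfneg : ∀ a ∈ K, f a ≤ 0 := by
    rintro a ⟨x, hx, rfl⟩
    by_contra hpos
    push_neg at hpos
    have hscale : ∀ t : ℝ, 0 ≤ t → t * f (T x) < u := by
      intro t ht
      have htx : T (t • x) = t • T x := map_smul T t x
      have hmem : (t • x) ∈ {x : ι → ℝ | 0 ≤ x} := by
        intro i
        have := hx i
        simp only [Pi.smul_apply, smul_eq_mul, Pi.zero_apply] at *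
        nlinarith
      have := hfa (T (t • x)) ⟨t • x, hmem, rfl⟩
      rwa [htx, f.map_smul, smul_eq_mul] at this
    have := hscale ((u + 1) / f (T x)) (by positivity)
    rw [div_mul_cancel₀ _ (ne_of_gt hpos)] at this
    linarith
  have hwK : ∀ i, w i ∈ K := by
    intro i
    refine ⟨Pi.single i 1, ?_, ?_⟩
    · intro j
      by_cases h : j = i <;> simp [h, Pi.single_apply]
    · show ∑ j, Pi.single i 1 j • w j = w i
      rw [Finset.sum_eq_single i]
      · simp
      · intro j _ hj
        simp [Pi.single_apply, hj]
      · intro hj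
        exact absurd (Finset.mem_univ i) hj
  have := h f (fun i => hfneg (w i) (hwK i))
  linarith [hfc, hu0]

/-- Representation of continuous linear functionals on `(Fin m → ℝ) × ℝ`. -/
private lemma clm_repr {m : ℕ} (f : ((Fin m → ℝ) × ℝ) →L[ℝ] ℝ) :
    ∃ (g : Fin m → ℝ) (γ : ℝ), ∀ (z : Fin m → ℝ) (τ : ℝ), f (z, τ) = z ⬝ᵥ g + τ * γ := by
  classical
  set F : (Fin m → ℝ) →ₗ[ℝ] ℝ := (f : ((Fin m → ℝ) × ℝ) →ₗ[ℝ] ℝ).comp (LinearMap.inl ℝ _ _)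
    with hF
  refine ⟨fun j => F (fun k => if j = k then 1 else 0), f (0, 1), fun z τ => ?_⟩
  have hsplit : (z, τ) = ((z, 0) : (Fin m → ℝ) × ℝ) + (0, τ) := by simp
  have h2 : f (0, τ) = τ * f (0, 1) := by
    have : ((0, τ) : (Fin m → ℝ) × ℝ) = τ • ((0, 1) : (Fin m → ℝ) × ℝ) := by
      simp [Prod.smul_mk]
    rw [this, f.map_smul, smul_eq_mul]
  have h1 : f (z, 0) = z ⬝ᵥ (fun j => F (fun k => if j = k then 1 else 0)) := by
    have : f (z, 0) = F z := rfl
    rw [this, LinearMap.pi_apply_eq_sum_univ F z]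
    simp [dotProduct, smul_eq_mul]
  rw [hsplit, map_add, h1, h2]

private lemma redundant_imp {m p : ℕ} (D : Matrix (Fin p) (Fin m) ℝ) (d : Fin p → ℝ)
    (s : Fin m → ℝ) (s₀ : ℝ) (I : Finset (Fin p))
    (hcons : ∃ y : Fin m → ℝ, ∀ i ∈ I, D i ⬝ᵥ y ≤ d i)
    (hred : ∀ y : Fin m → ℝ, (∀ i ∈ I, D i ⬝ᵥ y ≤ d i) → s ⬝ᵥ y ≤ s₀) :
    ∃ u : Fin p → ℝ, 0 ≤ u ∧ (∀ i, u i ≠ 0 → i ∈ I) ∧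
      (∑ i, u i • D i = s) ∧ ∑ i, u i * d i ≤ s₀ := by
  classical
  set w : (↥I ⊕ Unit) → (Fin m → ℝ) × ℝ := fun i =>
    Sum.elim (fun i : ↥I => (D i.1, -d i.1)) (fun _ => (0, -1)) i with hw
  have hfar := farkas_cone w ((s, -s₀) : (Fin m → ℝ) × ℝ) ?_
  · obtain ⟨u, hu0, husum⟩ := hfar
    rw [Fintype.sum_sum_type] at husum
    set v : Fin p → ℝ := fun i => if h : i ∈ I then u (Sum.inl ⟨i, h⟩) else 0 with hv
    have hv0 : 0 ≤ v := by
      intro i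
      by_cases h : i ∈ I <;> simp [hv, h]
      exact hu0 (Sum.inl ⟨i, h⟩)
    have hvI : ∀ i, v i ≠ 0 → i ∈ I := by
      intro i hi
      by_contra h
      exact hi (by simp [hv, h])
    have hfst := congrArg Prod.fst husum
    have hsnd := congrArg Prod.snd husum
    -- compute components
    have hfst' : ∑ i : ↥I, u (Sum.inl i) • D i.1 = s := by
      have := hfst
      simpa [hw, Prod.fst_sum] using this
    have hsnd' : ∑ i : ↥I, u (Sum.inl i) * d i.1 + u (Sum.inr ()) = s₀ := by
      have := hsnd
      simp [hw, Prod.snd_sum, mul_neg, Finset.sum_neg_distrib] at this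
      rw [← Finset.univ_eq_attach] at this
      linarith
    refine ⟨v, hv0, hvI, ?_, ?_⟩
    · rw [sum_support_subtype I (fun i => v i • D i)
        (fun i hi => by simp [hv, hi])]
      rw [← hfst']
      apply Finset.sum_congr rfl
      intro i _
      have : v i.1 = u (Sum.inl i) := by
        simp [hv, i.2]
      rw [this]
    · have hveq : ∑ i, v i * d i = ∑ i : ↥I, u (Sum.inl i) * d i.1 := by
        rw [sum_support_subtype I (fun i => v i * d i)
          (fun i hi => by simp [hv, hi])]
        apply Finset.sum_congr rfl
        intro i _
        have : v i.1 = u (Sum.inl i) := by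
          simp [hv, i.2]
        rw [this]
      have hu0' : (0:ℝ) ≤ u (Sum.inr ()) := hu0 (Sum.inr ())
      rw [hveq]
      linarith [hsnd']
  · -- the geometric hypothesis of Farkas
    intro f hf
    obtain ⟨g, γ, hrep⟩ := clm_repr f
    have hγ : 0 ≤ γ := by
      have h0 := hf (Sum.inr ())
      simp only [hw, Sum.elim_inr] at h0
      rw [hrep 0 (-1)] at h0
      simp only [zero_dotProduct] at h0
      linarith
    have hDg : ∀ i : ↥I, D i.1 ⬝ᵥ g ≤ d i.1 * γ := by
      intro i
      have h0 := hf (Sum.inl i)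
      simp only [hw, Sum.elim_inl] at h0
      rw [hrep (D i.1) (-d i.1)] at h0
      linarith
    show f (s, -s₀) ≤ 0
    rw [hrep s (-s₀)]
    rcases eq_or_lt_of_le hγ with hγ0 | hγpos
    · -- γ = 0
      obtain ⟨y₀, hy₀⟩ := hcons
      by_contra hpos
      push_neg at hpos
      have hsg : 0 < s ⬝ᵥ g := by
        rw [← hγ0] at hpos
        simpa using hpos
      have hy₀s : s ⬝ᵥ y₀ ≤ s₀ := hred y₀ hy₀
      set lam : ℝ := (s₀ - s ⬝ᵥ y₀) / (s ⬝ᵥ g) + 1 with hlam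
      have hlam0 : 0 ≤ lam := by
        have := div_nonneg (by linarith : (0:ℝ) ≤ s₀ - s ⬝ᵥ y₀) hsg.le
        rw [hlam]; linarith
      have hfeas : ∀ i ∈ I, D i ⬝ᵥ (y₀ + lam • g) ≤ d i := by
        intro i hi
        rw [dotProduct_add, dotProduct_smul, smul_eq_mul]
        have hDgi := hDg ⟨i, hi⟩
        rw [← hγ0, mul_zero] at hDgi
        have : lam * (D i ⬝ᵥ g) ≤ 0 := mul_nonpos_of_nonneg_of_nonpos hlam0 hDgi
        linarith [hy₀ i hi]
      have hredy := hred _ hfeas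
      rw [dotProduct_add, dotProduct_smul, smul_eq_mul] at hredy
      have hcalc : lam * (s ⬝ᵥ g) = (s₀ - s ⬝ᵥ y₀) + s ⬝ᵥ g := by
        rw [hlam, add_mul, one_mul, div_mul_cancel₀ _ (ne_of_gt hsg)]
      linarith
    · -- 0 < γ
      have hfeas : ∀ i ∈ I, D i ⬝ᵥ (γ⁻¹ • g) ≤ d i := by
        intro i hi
        rw [dotProduct_smul, smul_eq_mul]
        have hDgi := hDg ⟨i, hi⟩
        have h1 : γ⁻¹ * (D i ⬝ᵥ g) ≤ γ⁻¹ * (d i * γ) :=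
          mul_le_mul_of_nonneg_left hDgi (inv_nonneg.mpr hγpos.le)
        have h2 : γ⁻¹ * (d i * γ) = d i := by
          field_simp
        linarith
      have hredy := hred _ hfeas
      rw [dotProduct_smul, smul_eq_mul] at hredy
      have : s ⬝ᵥ g ≤ s₀ * γ := by
        have := mul_le_mul_of_nonneg_left hredy hγpos.le
        rw [← mul_assoc, mul_inv_cancel₀ (ne_of_gt hγpos), one_mul] at this
        linarith [mul_comm s₀ γ ▸ this]
      linarith

private lemma sum_smul_dot {m : ℕ} {ι : Type*} [Fintype ι] (c : ι → ℝ)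
    (w : ι → Fin m → ℝ) (z : Fin m → ℝ) :
    (∑ j, c j • w j) ⬝ᵥ z = ∑ j, c j * (w j ⬝ᵥ z) := by
  simp only [dotProduct, Finset.sum_apply, Pi.smul_apply, smul_eq_mul,
    Finset.sum_mul, Finset.mul_sum]
  rw [Finset.sum_comm]
  apply Finset.sum_congr rfl
  intro j _
  apply Finset.sum_congr rfl
  intro k _
  ring

private lemma transpose_mulVec_eq_sum {m p : ℕ} (D : Matrix (Fin p) (Fin m) ℝ)
    (v : Fin p → ℝ) : Dᵀ.mulVec v = ∑ i, v i • D i := by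
  funext j
  simp only [Matrix.mulVec, dotProduct, Matrix.transpose_apply, Finset.sum_apply,
    Pi.smul_apply, smul_eq_mul]
  apply Finset.sum_congr rfl
  intro i _
  ring


/-- Theorem 7 of the paper: characterization of redundant inequalities for an
inconsistent system of linear inequalities. -/
theorem stmt_13
    (m p : ℕ) (hm : 0 < m) (hp : 0 < p)
    (D : Matrix (Fin p) (Fin m) ℝ) (d : Fin p → ℝ) (s : Fin m → ℝ) (s₀ : ℝ)
    (hincons : ¬ ∃ y : Fin m → ℝ, D.mulVec y ≤ d) :
    ((∃ I : Finset (Fin p),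
        (∃ y : Fin m → ℝ, ∀ i ∈ I, D i ⬝ᵥ y ≤ d i) ∧
        (∀ y : Fin m → ℝ, (∀ i ∈ I, D i ⬝ᵥ y ≤ d i) → s ⬝ᵥ y ≤ s₀)) ↔
      (∃ (v : Fin p → ℝ) (v₀ : ℝ), 0 ≤ v ∧ 0 ≤ v₀ ∧
        Dᵀ.mulVec v = s ∧ d ⬝ᵥ v + v₀ = s₀ ∧
        LinearIndependent ℝ (fun i : {i : Fin p // 0 < v i} => D i.1))) ∧
    (∀ (v : Fin p → ℝ) (v₀ : ℝ), 0 ≤ v → 0 ≤ v₀ →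
      Dᵀ.mulVec v = s → d ⬝ᵥ v + v₀ = s₀ →
      LinearIndependent ℝ (fun i : {i : Fin p // 0 < v i} => D i.1) →
      ∃ y : Fin m → ℝ, ∀ i : Fin p, 0 < v i → D i ⬝ᵥ y ≤ d i) := by
  classical
  -- the "moreover" part
  have moreover : ∀ (v : Fin p → ℝ),
      LinearIndependent ℝ (fun i : {i : Fin p // 0 < v i} => D i.1) →
      ∃ y : Fin m → ℝ, ∀ i : Fin p, 0 < v i → D i ⬝ᵥ y ≤ d i := by
    intro v hind
    obtain ⟨y, hy⟩ := exists_dotProduct_eq (fun i : {i : Fin p // 0 < v i} => D i.1)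
      hind (fun i => d i.1)
    exact ⟨y, fun i hvi => (hy ⟨i, hvi⟩).le⟩
  constructor
  · constructor
    · -- forward direction
      rintro ⟨I, hcons, hred⟩
      obtain ⟨u, hu0, huI, husum, hud⟩ := redundant_imp D d s s₀ I hcons hred
      -- restrict to I and apply Carathéodory
      set ub : ↥I → ℝ := fun i => u i.1 with hub
      have hub0 : 0 ≤ ub := fun i => hu0 i.1
      have H : ∀ c : ↥I → ℝ, 0 ≤ c → ∑ i, c i • D i.1 = 0 → 0 ≤ ∑ i, c i * d i.1 := by
        intro c hc hcw
        obtain ⟨y, hy⟩ := hcons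
        have h1 : (∑ i : ↥I, c i • D i.1) ⬝ᵥ y = ∑ i : ↥I, c i * (D i.1 ⬝ᵥ y) :=
          sum_smul_dot c _ y
        rw [hcw, zero_dotProduct] at h1
        have h2 : ∑ i : ↥I, c i * (D i.1 ⬝ᵥ y) ≤ ∑ i : ↥I, c i * d i.1 := by
          apply Finset.sum_le_sum
          intro i _
          exact mul_le_mul_of_nonneg_left (hy i.1 i.2) (hc i)
        linarith
      obtain ⟨u', hu'0, hu'supp, hu'sum, hu'd, hu'ind⟩ :=
        cara2 (fun i : ↥I => D i.1) (fun i => d i.1) H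
          ({i : ↥I | ub i ≠ 0}).ncard ub hub0 le_rfl
      set v : Fin p → ℝ := fun i => if h : i ∈ I then u' ⟨i, h⟩ else 0 with hv
      have hv0 : 0 ≤ v := by
        intro i
        by_cases h : i ∈ I <;> simp [hv, h]
        exact hu'0 ⟨i, h⟩
      have hvsupp : ∀ i, v i ≠ 0 → i ∈ I := by
        intro i hi
        by_contra h
        exact hi (by simp [hv, h])
      have hvmem : ∀ i : ↥I, v i.1 = u' i := by
        intro i
        simp [hv, i.2]
      have hvsum : ∑ i, v i • D i = s := by
        rw [sum_support_subtype I (fun i => v i • D i)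
          (fun i hi => by simp [hv, hi])]
        have : ∑ i : ↥I, v i.1 • D i.1 = ∑ i : ↥I, u' i • D i.1 := by
          apply Finset.sum_congr rfl
          intro i _
          rw [hvmem i]
        rw [this, hu'sum]
        -- now ∑ i : ↥I, ub i • D i.1 = s
        rw [← sum_support_subtype I (fun i => u i • D i)
          (fun i hi => by have h0 : u i = 0 := not_not.mp (fun h => hi (huI i h)); simp [h0])]
        exact husum
      have hvd : ∑ i, v i * d i ≤ s₀ := by
        rw [sum_support_subtype I (fun i => v i * d i)
          (fun i hi => by simp [hv, hi])]
        have h1 : ∑ i : ↥I, v i.1 * d i.1 = ∑ i : ↥I, u' i * d i.1 := by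
          apply Finset.sum_congr rfl
          intro i _
          rw [hvmem i]
        have h2 : ∑ i : ↥I, ub i * d i.1 = ∑ i, u i * d i := by
          rw [← sum_support_subtype I (fun i => u i * d i)
            (fun i hi => by have h0 : u i = 0 := not_not.mp (fun h => hi (huI i h)); simp [h0])]
        rw [h1]
        linarith [hu'd, h2 ▸ hud]
      have hdv : d ⬝ᵥ v = ∑ i, v i * d i := by
        simp only [dotProduct]
        apply Finset.sum_congr rfl
        intro i _
        ring
      refine ⟨v, s₀ - d ⬝ᵥ v, hv0, by rw [hdv]; linarith, ?_, by ring, ?_⟩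
      · rw [transpose_mulVec_eq_sum]
        exact hvsum
      · -- independence transfer
        have hg : ∀ i : {i : Fin p // 0 < v i}, i.1 ∈ I := by
          intro i
          by_contra h
          have : v i.1 = 0 := by simp [hv, h]
          exact absurd this (ne_of_gt i.2)
        set g : {i : Fin p // 0 < v i} → {i : ↥I // u' i ≠ 0} :=
          fun i => ⟨⟨i.1, hg i⟩, by rw [← hvmem ⟨i.1, hg i⟩]; exact ne_of_gt i.2⟩ with hgdef
        have hginj : Function.Injective g := by
          intro a b hab
          apply Subtype.ext
          have := congrArg (fun x : {i : ↥I // u' i ≠ 0} => x.1.1) hab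
          exact this
        exact hu'ind.comp g hginj
    · -- backward direction
      rintro ⟨v, v₀, hv0, hv₀0, hDv, hdv, hind⟩
      set I : Finset (Fin p) := Finset.univ.filter (fun i => 0 < v i) with hI
      obtain ⟨y₁, hy₁⟩ := exists_dotProduct_eq (fun i : {i : Fin p // 0 < v i} => D i.1)
        hind (fun i => d i.1)
      refine ⟨I, ⟨y₁, fun i hi => ?_⟩, fun y hy => ?_⟩
      · have hvi : 0 < v i := by
          rw [hI] at hi
          exact (Finset.mem_filter.mp hi).2
        exact (hy₁ ⟨i, hvi⟩).le
      · have hsum : s ⬝ᵥ y = ∑ i, v i * (D i ⬝ᵥ y) := by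
          rw [← hDv, transpose_mulVec_eq_sum]
          exact sum_smul_dot v _ y
        have hle : ∑ i, v i * (D i ⬝ᵥ y) ≤ ∑ i, v i * d i := by
          apply Finset.sum_le_sum
          intro i _
          have h0 : (0:ℝ) ≤ v i := hv0 i
          rcases eq_or_lt_of_le h0 with h | h
          · rw [← h]
            simp
          · exact mul_le_mul_of_nonneg_left
              (hy i (by rw [hI]; simp [h])) (le_of_lt h)
        have hdv' : ∑ i, v i * d i = d ⬝ᵥ v := by
          simp only [dotProduct]
          apply Finset.sum_congr rfl
          intro i _
          ring
        rw [hsum]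
        calc ∑ i, v i * (D i ⬝ᵥ y) ≤ ∑ i, v i * d i := hle
          _ = d ⬝ᵥ v := hdv'
          _ ≤ s₀ := by linarith
  · intro v v₀ _ _ _ _ hind
    exact moreover v hind
end

section
/- Suppose the system D y ≤ d is consistent and the inequality s·y ≤ s₀ is redundant for it. Then the linear program: minimize d·v over v ∈ ℝ^p subject to Dᵀv = s, v ≥ 0, has an optimal solution v*, and s₀ ≥ d·v*. If s₀ > d·v*, then s·y ≤ s₀ is strongly redundant for D y ≤ d; if s₀ = d·v*, then s·y ≤ s₀ is weakly redundant for D y ≤ d. -/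
open Matrix Finset

section Carath
variable {F : Type*} [AddCommGroup F] [Module ℝ F]

lemma cone_carath_s14 {n : ℕ} (a : Fin n → F) :
    ∀ (N : ℕ) (c : Fin n → ℝ), ((Finset.univ.filter fun i => c i ≠ 0).card ≤ N) →
      (∀ i, 0 ≤ c i) →
      ∃ (t : Finset (Fin n)) (c' : Fin n → ℝ),
        LinearIndependent ℝ (fun i : t => a (i : Fin n)) ∧ (∀ i, 0 ≤ c' i) ∧
        (∀ i ∉ t, c' i = 0) ∧ (∑ i, c' i • a i) = ∑ i, c i • a i := by
  classical
  intro N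
  induction N with
  | zero =>
    intro c hcard hpos
    have hc0 : ∀ i, c i = 0 := by
      intro i
      by_contra hi
      have : i ∈ Finset.univ.filter fun i => c i ≠ 0 := by simp [hi]
      have := Finset.card_pos.2 ⟨i, this⟩
      omega
    refine ⟨∅, c, ?_, hpos, fun i _ => hc0 i, rfl⟩
    haveI : IsEmpty ((∅ : Finset (Fin n)) : Type) :=
      ⟨fun x => (Finset.notMem_empty _ x.2)⟩
    exact linearIndependent_empty_type
  | succ N ih =>
    intro c hcard hpos
    set supp := Finset.univ.filter fun i => c i ≠ 0 with hsupp
    by_cases hLI : LinearIndependent ℝ (fun i : supp => a (i : Fin n))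
    · refine ⟨supp, c, hLI, hpos, fun i hi => ?_, rfl⟩
      by_contra hne
      exact hi (by simp [hsupp, hne])
    · rw [Fintype.not_linearIndependent_iff] at hLI
      obtain ⟨g, hgsum, i₁, hi₁⟩ := hLI
      set gbar : Fin n → ℝ := fun i => if h : i ∈ supp then g ⟨i, h⟩ else 0 with hgbar
      have hgbar_supp : ∀ i, gbar i ≠ 0 → i ∈ supp := by
        intro i hi
        by_contra h
        exact hi (by simp [hgbar, h])
      have hgbar_sum : (∑ i, gbar i • a i) = 0 := by
        have h1 : (∑ i ∈ supp, gbar i • a i) = ∑ i, gbar i • a i :=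
          Finset.sum_subset (Finset.subset_univ _)
            (fun i _ hi => by simp [hgbar, hi])
        have h2 : (∑ i ∈ supp, gbar i • a i) = ∑ i : supp, g i • a (i : Fin n) := by
          rw [← Finset.sum_attach supp (fun i => gbar i • a i)]
          rw [Finset.univ_eq_attach]
          refine Finset.sum_congr rfl fun i _ => ?_
          simp [hgbar, i.2]
        rw [← h1, h2, hgsum]
      have hgbar_ne : gbar (i₁ : Fin n) ≠ 0 := by
        simpa [hgbar, i₁.2] using hi₁
      obtain ⟨e, hesum, hesupp, i₂, hi₂⟩ :
          ∃ e : Fin n → ℝ, (∑ i, e i • a i) = 0 ∧ (∀ i, e i ≠ 0 → i ∈ supp) ∧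
            ∃ i, 0 < e i := by
        rcases lt_or_gt_of_ne hgbar_ne with h | h
        · refine ⟨-gbar, by simp [hgbar_sum], fun i hi => hgbar_supp i (by simpa using hi),
            i₁, by simpa using h⟩
        · exact ⟨gbar, hgbar_sum, hgbar_supp, i₁, h⟩
      set P := supp.filter fun i => 0 < e i with hP
      have hPne : P.Nonempty := ⟨i₂, by simp [hP, hesupp i₂ (ne_of_gt hi₂), hi₂]⟩
      obtain ⟨i₀, hi₀P, hmin⟩ := P.exists_min_image (fun i => c i / e i) hPne
      have he₀ : 0 < e i₀ := (Finset.mem_filter.1 hi₀P).2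
      set τ := c i₀ / e i₀ with hτdef
      have hτ : 0 ≤ τ := div_nonneg (hpos _) he₀.le
      set c'' : Fin n → ℝ := fun i => c i - τ * e i with hc''
      have hc''pos : ∀ i, 0 ≤ c'' i := by
        intro i
        by_cases hei : 0 < e i
        · have hiP : i ∈ P := by simp [hP, hesupp i (ne_of_gt hei), hei]
          have := hmin i hiP
          have : τ * e i ≤ c i := by
            rw [hτdef]
            calc c i₀ / e i₀ * e i ≤ c i / e i * e i := by
                  apply mul_le_mul_of_nonneg_right this hei.le
            _ = c i := div_mul_cancel₀ _ (ne_of_gt hei)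
          simp only [hc'']; linarith
        · push_neg at hei
          have : τ * e i ≤ 0 := mul_nonpos_of_nonneg_of_nonpos hτ hei
          have := hpos i
          simp only [hc'']; linarith
      have hc''i₀ : c'' i₀ = 0 := by
        simp only [hc'', hτdef]
        field_simp
        ring
      have hi₀supp : i₀ ∈ supp := Finset.mem_of_mem_filter _ hi₀P
      have hsubset : (Finset.univ.filter fun i => c'' i ≠ 0) ⊆ supp.erase i₀ := by
        intro i hi
        have hine : c'' i ≠ 0 := (Finset.mem_filter.1 hi).2
        refine Finset.mem_erase.2 ⟨?_, ?_⟩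
        · rintro rfl; exact hine hc''i₀
        · by_contra h
          have hci : c i = 0 := by
            by_contra h'
            exact h (by simp [hsupp, h'])
          have hei : e i = 0 := by
            by_contra h'
            exact h (hesupp i h')
          exact hine (by simp [hc'', hci, hei])
      have hcard'' : (Finset.univ.filter fun i => c'' i ≠ 0).card ≤ N := by
        have h1 := Finset.card_le_card hsubset
        have h2 := Finset.card_erase_of_mem hi₀supp
        omega
      have hsum'' : (∑ i, c'' i • a i) = ∑ i, c i • a i := by
        have : (∑ i, (τ * e i) • a i) = 0 := by
          simp only [mul_smul, ← Finset.smul_sum, hesum, smul_zero]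
        simp only [hc'', sub_smul, Finset.sum_sub_distrib, this, sub_zero]
      obtain ⟨t, c', h1, h2, h3, h4⟩ := ih c'' hcard'' hc''pos
      exact ⟨t, c', h1, h2, h3, h4.trans hsum''⟩

end Carath
section Closed
variable {F : Type*} [NormedAddCommGroup F] [NormedSpace ℝ F] [FiniteDimensional ℝ F]

lemma cone_isClosed_s14 {n : ℕ} (a : Fin n → F) :
    IsClosed {x : F | ∃ c : Fin n → ℝ, (∀ i, 0 ≤ c i) ∧ x = ∑ i, c i • a i} := by
  classical
  have key : {x : F | ∃ c : Fin n → ℝ, (∀ i, 0 ≤ c i) ∧ x = ∑ i, c i • a i} =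
      ⋃ (t : Finset (Fin n)) (_ : LinearIndependent ℝ fun i : t => a (i : Fin n)),
        (fun c : t → ℝ => ∑ i, c i • a (i : Fin n)) '' {c | ∀ i, 0 ≤ c i} := by
    ext x
    simp only [Set.mem_setOf_eq, Set.mem_iUnion, Set.mem_image]
    constructor
    · rintro ⟨c, hc, rfl⟩
      obtain ⟨t, c', hLI, hpos, hzero, hsum⟩ := cone_carath_s14 a _ c le_rfl hc
      refine ⟨t, hLI, fun i => c' i, fun i => hpos _, ?_⟩
      rw [← hsum]
      rw [Finset.sum_coe_sort t (fun i => c' i • a i)]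
      exact Finset.sum_subset (Finset.subset_univ _)
        (fun i _ hi => by simp [hzero i hi])
    · rintro ⟨t, hLI, c, hc, rfl⟩
      refine ⟨fun i => if h : i ∈ t then c ⟨i, h⟩ else 0, fun i => ?_, ?_⟩
      · by_cases h : i ∈ t
        · simpa [h] using hc ⟨i, h⟩
        · simp [h]
      · calc (∑ i : t, c i • a (i : Fin n))
            = ∑ i ∈ t, (if h : i ∈ t then c ⟨i, h⟩ else 0) • a i := by
              rw [← Finset.sum_coe_sort t
                (fun i => (if h : i ∈ t then c ⟨i, h⟩ else 0) • a i)]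
              exact Finset.sum_congr rfl fun i _ => by simp [i.2]
          _ = ∑ i : Fin n, (if h : i ∈ t then c ⟨i, h⟩ else 0) • a i :=
              Finset.sum_subset (Finset.subset_univ t) (fun i _ hi => by simp [hi])
  rw [key]
  apply isClosed_iUnion_of_finite
  intro t
  apply isClosed_iUnion_of_finite
  intro hLI
  set L : (t → ℝ) →ₗ[ℝ] F :=
    { toFun := fun c => ∑ i, c i • a (i : Fin n)
      map_add' := fun c₁ c₂ => by simp [add_smul, Finset.sum_add_distrib]
      map_smul' := fun r c => by
        simp [Pi.smul_apply, smul_eq_mul, mul_smul, ← Finset.smul_sum] } with hL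
  have hinj : Function.Injective L := by
    have hker := Fintype.linearIndependent_iff.1 hLI
    intro c₁ c₂ h
    funext i
    have hzero : (∑ j, (c₁ - c₂) j • a (j : Fin n)) = 0 := by
      simp only [Pi.sub_apply, sub_smul, Finset.sum_sub_distrib]
      have : L c₁ = L c₂ := h
      simp only [hL, LinearMap.coe_mk, AddHom.coe_mk] at this
      rw [sub_eq_zero]; exact this
    have := hker (c₁ - c₂) hzero i
    simpa [sub_eq_zero] using this
  have horth : IsClosed {c : t → ℝ | ∀ i, 0 ≤ c i} := by
    have : {c : t → ℝ | ∀ i, 0 ≤ c i} = ⋂ i, {c | 0 ≤ c i} := by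
      ext c; simp [Set.mem_iInter]
    rw [this]
    exact isClosed_iInter fun i => isClosed_le continuous_const (continuous_apply i)
  have := (LinearMap.isClosedEmbedding_of_injective
    (LinearMap.ker_eq_bot.mpr hinj)).isClosedMap _ horth
  exact this
end Closed
section Farkas

open scoped InnerProductSpace

lemma farkas_s14 {m p : ℕ} (D : Matrix (Fin p) (Fin m) ℝ) (d : Fin p → ℝ) (s : Fin m → ℝ) (t : ℝ)
    (hcons : ∃ y : Fin m → ℝ, D.mulVec y ≤ d)
    (hred : ∀ y : Fin m → ℝ, D.mulVec y ≤ d → s ⬝ᵥ y ≤ t) :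
    ∃ v : Fin p → ℝ, (∀ i, 0 ≤ v i) ∧ Dᵀ.mulVec v = s ∧ d ⬝ᵥ v ≤ t := by
  classical
  set toE : (Fin (m+1) → ℝ) → EuclideanSpace ℝ (Fin (m+1)) :=
    fun x => (WithLp.equiv 2 (∀ _ : Fin (m+1), ℝ)).symm x with htoE
  set A : Fin (p+1) → (Fin (m+1) → ℝ) :=
    Fin.snoc (fun i' : Fin p => (Fin.snoc (fun j => D i' j) (d i') : Fin (m+1) → ℝ))
      (Fin.snoc (0 : Fin m → ℝ) 1) with hA
  set a : Fin (p+1) → EuclideanSpace ℝ (Fin (m+1)) := fun i => toE (A i) with ha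
  have hacoord : ∀ i j, a i j = A i j := fun i j => rfl
  set b : EuclideanSpace ℝ (Fin (m+1)) := toE (Fin.snoc s t) with hb
  have hbcoord : ∀ j, b j = (Fin.snoc s t : Fin (m+1) → ℝ) j := fun j => rfl
  -- the cone generated by the columns
  set C : ConvexCone ℝ (EuclideanSpace ℝ (Fin (m+1))) :=
    { carrier := {x | ∃ c : Fin (p+1) → ℝ, (∀ i, 0 ≤ c i) ∧ x = ∑ i, c i • a i}
      smul_mem' := by
        rintro r hr x ⟨c, hc, rfl⟩
        refine ⟨fun i => r * c i, fun i => mul_nonneg hr.le (hc i), ?_⟩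
        rw [Finset.smul_sum]
        exact Finset.sum_congr rfl fun i _ => (mul_smul r (c i) (a i)).symm
      add_mem' := by
        rintro x ⟨c₁, hc₁, rfl⟩ y ⟨c₂, hc₂, rfl⟩
        refine ⟨fun i => c₁ i + c₂ i, fun i => add_nonneg (hc₁ i) (hc₂ i), ?_⟩
        rw [← Finset.sum_add_distrib]
        exact Finset.sum_congr rfl fun i _ => (add_smul (c₁ i) (c₂ i) (a i)).symm } with hC
  have hCmem : ∀ x, x ∈ C ↔ ∃ c : Fin (p+1) → ℝ, (∀ i, 0 ≤ c i) ∧ x = ∑ i, c i • a i :=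
    fun x => Iff.rfl
  -- coordinates of a sum
  have hsum_coord : ∀ (c : Fin (p+1) → ℝ) (j : Fin (m+1)),
      (∑ i, c i • a i) j = ∑ i, c i * A i j := by
    intro c j
    have := map_sum (EuclideanSpace.projₗ j (𝕜 := ℝ)) (fun i => c i • a i) Finset.univ
    simp only [_root_.map_smul, smul_eq_mul] at this
    calc ((∑ i, c i • a i) : EuclideanSpace ℝ (Fin (m+1))) j
        = EuclideanSpace.projₗ j (𝕜 := ℝ) (∑ i, c i • a i) := rfl
      _ = ∑ i, c i * (EuclideanSpace.projₗ j (𝕜 := ℝ) (a i)) := this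
      _ = ∑ i, c i * A i j := by
          exact Finset.sum_congr rfl fun i _ => by rw [show (EuclideanSpace.projₗ j (𝕜 := ℝ) (a i)) = a i j from rfl, hacoord]
  -- b is in the cone
  have hbC : b ∈ C := by
    by_contra hbnot
    obtain ⟨y, hy, hyb⟩ :
        ∃ y, (∀ x ∈ C, 0 ≤ ⟪x, y⟫_ℝ) ∧ ⟪y, b⟫_ℝ < 0 := by
      have hpt : C.Pointed := ⟨0, fun i => le_refl 0, by simp⟩
      obtain ⟨y, hy, hyb⟩ := ProperCone.hyperplane_separation' (x₀ := b)
        ({ toSubmodule := C.toPointedCone hpt, isClosed' := cone_isClosed_s14 a } :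
          ProperCone ℝ (EuclideanSpace ℝ (Fin (m+1)))) hbnot
      exact ⟨y, fun x hx => hy x hx, by rwa [real_inner_comm]⟩
    -- each generator is in the cone
    have hgen : ∀ i₀, a i₀ ∈ C := by
      intro i₀
      refine ⟨fun i => if i = i₀ then 1 else 0, fun i => by positivity, ?_⟩
      simp [Finset.sum_ite_eq', ite_smul]
    -- inner products in coordinates
    have hinner : ∀ (x z : EuclideanSpace ℝ (Fin (m+1))), ⟪x, z⟫_ℝ = ∑ j, x j * z j := by
      intro x z
      simp [PiLp.inner_apply, RCLike.inner_apply, map_id]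
      exact Finset.sum_congr rfl fun _ _ => mul_comm _ _
    set y' : Fin m → ℝ := fun j => y (Fin.castSucc j) with hy'
    set η : ℝ := y (Fin.last m) with hη
    have h1 : ∀ i : Fin p, 0 ≤ (∑ j, D i j * y' j) + d i * η := by
      intro i
      have := hy _ (hgen (Fin.castSucc i))
      rw [hinner] at this
      calc (0:ℝ) ≤ ∑ j, a (Fin.castSucc i) j * y j := this
        _ = (∑ j, D i j * y' j) + d i * η := by
            rw [Fin.sum_univ_castSucc]
            congr 1
            · exact Finset.sum_congr rfl fun j _ => by
                rw [hacoord, hA]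
                simp [Fin.snoc_castSucc, hy']
            · rw [hacoord, hA]
              simp [Fin.snoc_last, hη]
    have h2 : 0 ≤ η := by
      have := hy _ (hgen (Fin.last p))
      rw [hinner] at this
      calc (0:ℝ) ≤ ∑ j, a (Fin.last p) j * y j := this
        _ = η := by
            rw [Fin.sum_univ_castSucc]
            have hz : ∀ j : Fin m, a (Fin.last p) (Fin.castSucc j) * y (Fin.castSucc j) = 0 := by
              intro j
              rw [hacoord, hA]
              simp [Fin.snoc_last, Fin.snoc_castSucc]
            rw [Finset.sum_congr rfl fun j _ => hz j]
            rw [hacoord, hA]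
            simp [Fin.snoc_last, hη]
    have h3 : (∑ j, s j * y' j) + t * η < 0 := by
      have := hyb
      rw [real_inner_comm, hinner] at this
      calc (∑ j, s j * y' j) + t * η
          = ∑ j, b j * y j := by
            rw [Fin.sum_univ_castSucc]
            congr 1
            · exact Finset.sum_congr rfl fun j _ => by
                rw [hbcoord]; simp [Fin.snoc_castSucc, hy']
            · rw [hbcoord]; simp [Fin.snoc_last, hη]
        _ < 0 := this
    rcases eq_or_lt_of_le h2 with hη0 | hηpos
    · -- η = 0 : unboundedness contradiction
      obtain ⟨y₀, hy₀⟩ := hcons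
      have hsy' : (∑ j, s j * y' j) < 0 := by rw [← hη0] at h3; simpa using h3
      set lam : ℝ := (t + 1 - s ⬝ᵥ y₀) / (-(∑ j, s j * y' j)) with hlam
      have hden : 0 < -(∑ j, s j * y' j) := by linarith
      have hnum : 0 < t + 1 - s ⬝ᵥ y₀ := by
        have := hred y₀ hy₀; linarith
      have hlampos : 0 < lam := div_pos hnum hden
      set z : Fin m → ℝ := fun j => y₀ j - lam * y' j with hz
      have hfeas : D.mulVec z ≤ d := by
        intro i
        have hDy' : 0 ≤ ∑ j, D i j * y' j := by
          have := h1 i; rw [← hη0] at this; simpa using this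
        have : D.mulVec z i = D.mulVec y₀ i - lam * (∑ j, D i j * y' j) := by
          simp only [Matrix.mulVec, dotProduct, hz, mul_sub, Finset.sum_sub_distrib,
            Finset.mul_sum]
          congr 1
          exact Finset.sum_congr rfl fun j _ => by ring
        rw [this]
        have := hy₀ i
        nlinarith
      have hcontr := hred z hfeas
      have hsz : s ⬝ᵥ z = s ⬝ᵥ y₀ - lam * (∑ j, s j * y' j) := by
        simp only [dotProduct, hz, mul_sub, Finset.sum_sub_distrib, Finset.mul_sum]
        congr 1
        exact Finset.sum_congr rfl fun j _ => by ring
      have hlamval : lam * (∑ j, s j * y' j) = -(t + 1 - s ⬝ᵥ y₀) := by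
        rw [hlam]
        rw [div_mul_eq_mul_div, div_eq_iff (ne_of_gt hden)]
        ring
      rw [hsz, hlamval] at hcontr
      linarith
    · -- η > 0
      set z : Fin m → ℝ := fun j => -(y' j) / η with hz
      have hfeas : D.mulVec z ≤ d := by
        intro i
        have hterm : ∀ j, D i j * z j = -(D i j * y' j) / η := fun j => by
          simp only [hz]; rw [← mul_div_assoc, mul_neg]
        have : D.mulVec z i = (-(∑ j, D i j * y' j)) / η := by
          rw [Matrix.mulVec, dotProduct, Finset.sum_congr rfl fun j _ => hterm j,
            ← Finset.sum_div, Finset.sum_neg_distrib]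
        rw [this, div_le_iff₀ hηpos]
        have := h1 i
        nlinarith
      have hcontr := hred z hfeas
      have hterm2 : ∀ j, s j * z j = -(s j * y' j) / η := fun j => by
        simp only [hz]; rw [← mul_div_assoc, mul_neg]
      have hsz : s ⬝ᵥ z = (-(∑ j, s j * y' j)) / η := by
        rw [dotProduct, Finset.sum_congr rfl fun j _ => hterm2 j,
          ← Finset.sum_div, Finset.sum_neg_distrib]
      rw [hsz, div_le_iff₀ hηpos] at hcontr
      nlinarith
  -- extract the dual solution
  obtain ⟨c, hc, hb_eq⟩ := hbC
  set v : Fin p → ℝ := fun i => c (Fin.castSucc i) with hv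
  have hcoord : ∀ j, (Fin.snoc s t : Fin (m+1) → ℝ) j = ∑ i, c i * A i j := by
    intro j
    rw [← hbcoord, hb_eq, hsum_coord]
  refine ⟨v, fun i => hc _, ?_, ?_⟩
  · funext j
    have := hcoord (Fin.castSucc j)
    rw [Fin.snoc_castSucc, Fin.sum_univ_castSucc] at this
    have hlast : c (Fin.last p) * A (Fin.last p) (Fin.castSucc j) = 0 := by
      rw [hA]; simp [Fin.snoc_last, Fin.snoc_castSucc]
    rw [hlast, add_zero] at this
    rw [Matrix.mulVec, dotProduct]
    rw [this]
    refine (Finset.sum_congr rfl fun i _ => ?_)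
    rw [hA, Matrix.transpose_apply]
    simp [Fin.snoc_castSucc]
    ring
  · have := hcoord (Fin.last m)
    rw [Fin.snoc_last, Fin.sum_univ_castSucc] at this
    have hlast : c (Fin.last p) * A (Fin.last p) (Fin.last m) = c (Fin.last p) := by
      rw [hA]; simp [Fin.snoc_last]
    rw [hlast] at this
    have hdv : d ⬝ᵥ v = ∑ i : Fin p, c (Fin.castSucc i) * A (Fin.castSucc i) (Fin.last m) := by
      rw [dotProduct]
      refine (Finset.sum_congr rfl fun i _ => ?_)
      rw [hA]
      simp [Fin.snoc_castSucc, Fin.snoc_last, hv]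
      ring
    rw [hdv]
    have := hc (Fin.last p)
    linarith

end Farkas


/-- Corollary 5 of the paper: the dual linear program attached to a redundant
inequality has an optimal solution, and strict/tight inequality at the optimum distinguishes
strong and weak redundancy. -/
theorem stmt_14
    (m p : ℕ) (hm : 0 < m) (hp : 0 < p)
    (D : Matrix (Fin p) (Fin m) ℝ) (d : Fin p → ℝ) (s : Fin m → ℝ) (s₀ : ℝ)
    (hcons : ∃ y : Fin m → ℝ, D.mulVec y ≤ d)
    (hred : ∀ y : Fin m → ℝ, D.mulVec y ≤ d → s ⬝ᵥ y ≤ s₀) :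
    (∃ v : Fin p → ℝ, (0 ≤ v ∧ Dᵀ.mulVec v = s) ∧
        ∀ v' : Fin p → ℝ, 0 ≤ v' → Dᵀ.mulVec v' = s → d ⬝ᵥ v ≤ d ⬝ᵥ v') ∧
    (∀ v : Fin p → ℝ, 0 ≤ v → Dᵀ.mulVec v = s →
      (∀ v' : Fin p → ℝ, 0 ≤ v' → Dᵀ.mulVec v' = s → d ⬝ᵥ v ≤ d ⬝ᵥ v') →
      d ⬝ᵥ v ≤ s₀ ∧
      (d ⬝ᵥ v < s₀ →
        ∃ ε : ℝ, 0 < ε ∧ ∀ y : Fin m → ℝ, D.mulVec y ≤ d → s ⬝ᵥ y ≤ s₀ - ε) ∧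
      (s₀ = d ⬝ᵥ v →
        ¬ ∃ ε : ℝ, 0 < ε ∧ ∀ y : Fin m → ℝ, D.mulVec y ≤ d → s ⬝ᵥ y ≤ s₀ - ε)) := by
  classical
  obtain ⟨y₀, hy₀⟩ := hcons
  set Aset : Set ℝ := (fun y => s ⬝ᵥ y) '' {y | D.mulVec y ≤ d} with hAset
  have hAne : Aset.Nonempty := ⟨_, ⟨y₀, hy₀, rfl⟩⟩
  have hAbdd : BddAbove Aset := ⟨s₀, by rintro _ ⟨y, hy, rfl⟩; exact hred y hy⟩
  set σ := sSup Aset with hσ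
  have hle : ∀ y : Fin m → ℝ, D.mulVec y ≤ d → s ⬝ᵥ y ≤ σ :=
    fun y hy => le_csSup hAbdd ⟨y, hy, rfl⟩
  have hσle : σ ≤ s₀ := csSup_le hAne (by rintro _ ⟨y, hy, rfl⟩; exact hred y hy)
  -- weak duality
  have hweak : ∀ v' : Fin p → ℝ, 0 ≤ v' → Dᵀ.mulVec v' = s → σ ≤ d ⬝ᵥ v' := by
    intro v' hv' hDv'
    refine csSup_le hAne ?_
    rintro _ ⟨y, hy, rfl⟩
    have h1 : s ⬝ᵥ y = v' ⬝ᵥ (D.mulVec y) := by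
      rw [← hDv', Matrix.mulVec_transpose, Matrix.dotProduct_mulVec]
    have h2 : v' ⬝ᵥ (D.mulVec y) ≤ v' ⬝ᵥ d := by
      refine Finset.sum_le_sum fun i _ => ?_
      exact mul_le_mul_of_nonneg_left (hy i) (hv' i)
    have h3 : v' ⬝ᵥ d = d ⬝ᵥ v' := dotProduct_comm v' d
    simp only [Set.mem_setOf_eq] at hy
    linarith [h1, h2, h3]
  obtain ⟨vstar, hvpos, hvD, hvval⟩ := farkas_s14 D d s σ ⟨y₀, hy₀⟩ hle
  have hvpos' : (0 : Fin p → ℝ) ≤ vstar := fun i => hvpos i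
  have hvopt : d ⬝ᵥ vstar = σ := le_antisymm hvval (hweak vstar hvpos' hvD)
  constructor
  · exact ⟨vstar, ⟨hvpos', hvD⟩, fun v' h1 h2 => hvopt ▸ hweak v' h1 h2⟩
  · intro v hv hDv hopt
    have hvveq : d ⬝ᵥ v = σ := by
      have h1 : d ⬝ᵥ v ≤ σ := hvopt ▸ hopt vstar hvpos' hvD
      exact le_antisymm h1 (hweak v hv hDv)
    refine ⟨hvveq ▸ hσle, ?_, ?_⟩
    · intro hlt
      refine ⟨s₀ - d ⬝ᵥ v, by linarith, fun y hy => ?_⟩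
      have := hle y hy
      rw [hvveq]
      linarith
    · rintro heq ⟨ε, hε, hbound⟩
      have hσle' : σ ≤ s₀ - ε := csSup_le hAne (by rintro _ ⟨y, hy, rfl⟩; exact hbound y hy)
      rw [heq, hvveq] at *
      linarith
end
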